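/- arXiv:1006.5580 — 5 statements merged into one kernel-verified Lean document; each statement's English description precedes it below -/
import Mathlib

section
/- Let X be a normed space, U ⊆ X open nonempty, Y a Banach space, and W a set of weights such that for each compact set K ⊆ U there exists f_K ∈ W with inf_{x∈K} |f_K(x)| > 0. Then the weighted function space C^0_W(U,Y) is complete. -/
open Filter Topology Set
open scoped ENNReal NNReal

noncomputable section

variable {X : Type*} [NormedAddCommGroup X] [NormedSpace ℝ X]

/-- The weighted seminorm `sup_{x ∈ U} |f x| · ‖D^(ℓ) γ (x)‖_op`, valued in `ℝ≥0∞`,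
where the weight `f` takes values in the extended real line. -/
def wSemi {Y : Type*} [NormedAddCommGroup Y] [NormedSpace ℝ Y]
    (U : Set X) (f : X → EReal) (ℓ : ℕ) (γ : X → Y) : ℝ≥0∞ :=
  ⨆ x ∈ U, (f x).abs * (‖iteratedFDeriv ℝ ℓ γ x‖₊ : ℝ≥0∞)

/-- Membership in the weighted function space `C^k_W(U, Y)`:  `γ` is `k` times continuously
Fréchet differentiable on `U` and all weighted seminorms up to order `k` are finite. -/
def MemCW {Y : Type*} [NormedAddCommGroup Y] [NormedSpace ℝ Y]
    (U : Set X) (W : Set (X → EReal)) (k : ℕ∞) (γ : X → Y) : Prop :=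
  ContDiffOn ℝ k γ U ∧ ∀ f ∈ W, ∀ ℓ : ℕ, (ℓ : ℕ∞) ≤ k → wSemi U f ℓ γ < ⊤

/-- The subbasic "balls" of the locally convex topology of `C^k_W(U, Y)` (taken inside the
ambient function space). -/
def wBalls (Y : Type*) [NormedAddCommGroup Y] [NormedSpace ℝ Y]
    (U : Set X) (W : Set (X → EReal)) (k : ℕ∞) : Set (Set (X → Y)) :=
  {S | ∃ (γ₀ : X → Y) (f : X → EReal) (ℓ : ℕ) (ε : ℝ≥0∞),
    f ∈ W ∧ (ℓ : ℕ∞) ≤ k ∧ 0 < ε ∧ S = {γ | wSemi U f ℓ (γ - γ₀) < ε}}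

/-- The locally convex topology determined by the weighted seminorms, on the ambient
function space; its restriction to the subtype of `C^k_W` functions is the topology of
`C^k_W(U, Y)`. -/
def wTop (Y : Type*) [NormedAddCommGroup Y] [NormedSpace ℝ Y]
    (U : Set X) (W : Set (X → EReal)) (k : ℕ∞) : TopologicalSpace (X → Y) :=
  .generateFrom (wBalls Y U W k)

-- Auxiliary lemmas

lemma nnnorm_itfd_zero {Y : Type*} [NormedAddCommGroup Y] [NormedSpace ℝ Y]
    (g : X → Y) (x : X) : ‖iteratedFDeriv ℝ 0 g x‖₊ = ‖g x‖₊ :=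
  NNReal.eq norm_iteratedFDeriv_zero

lemma le_wSemi_zero {Y : Type*} [NormedAddCommGroup Y] [NormedSpace ℝ Y]
    {U : Set X} (f : X → EReal) (g : X → Y) {x : X} (hx : x ∈ U) :
    (f x).abs * (‖g x‖₊ : ℝ≥0∞) ≤ wSemi U f 0 g := by
  have := le_iSup₂ (f := fun x (_ : x ∈ U) => (f x).abs * (‖iteratedFDeriv ℝ 0 g x‖₊ : ℝ≥0∞)) x hx
  simpa [wSemi, nnnorm_itfd_zero] using this

lemma wSemi_zero_le {Y : Type*} [NormedAddCommGroup Y] [NormedSpace ℝ Y]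
    {U : Set X} {f : X → EReal} {g : X → Y} {ε : ℝ≥0∞}
    (h : ∀ x ∈ U, (f x).abs * (‖g x‖₊ : ℝ≥0∞) ≤ ε) : wSemi U f 0 g ≤ ε :=
  iSup₂_le fun x hx => by simpa [nnnorm_itfd_zero] using h x hx

lemma min_one_ne_zero {c : ℝ≥0∞} (hc : 0 < c) : min c 1 ≠ 0 := by
  simp [min_eq_iff, hc.ne', not_or]

lemma ennreal_cancel {c a n e : ℝ≥0∞} (hc : 0 < c) (hca : c ≤ a)
    (h : a * n < min c 1 * e) : n < e := by
  have hc't : min c 1 ≠ ⊤ := ne_top_of_le_ne_top ENNReal.one_ne_top (min_le_right _ _)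
  have h1 : min c 1 * n ≤ a * n :=
    mul_le_mul_left (le_trans (min_le_left _ _) hca) n
  exact (ENNReal.mul_lt_mul_iff_right (min_one_ne_zero hc) hc't).mp (lt_of_le_of_lt h1 h)

lemma mul_nnnorm_le_of_tendsto {Y : Type*} [NormedAddCommGroup Y] {ι : Type*}
    {l : Filter ι} [l.NeBot] {F : ι → Y} {y : Y} (hy : Tendsto F l (𝓝 y))
    {a ε : ℝ≥0∞} (hε : ε ≠ ⊤) (h : ∀ᶠ i in l, a * (‖F i‖₊ : ℝ≥0∞) ≤ ε) :
    a * (‖y‖₊ : ℝ≥0∞) ≤ ε := by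
  by_cases ha : a = ⊤
  · subst ha
    have h0 : ∀ᶠ i in l, F i = 0 := by
      refine h.mono fun i hi => ?_
      by_contra hne
      have : (‖F i‖₊ : ℝ≥0∞) ≠ 0 := by simpa using hne
      rw [ENNReal.top_mul this] at hi
      exact hε (top_le_iff.mp hi)
    have : y = 0 := tendsto_nhds_unique hy (tendsto_const_nhds.congr' (h0.mono fun i hi => hi.symm))
    simp [this]
  · have hnn : Tendsto (fun i => (‖F i‖₊ : ℝ≥0∞)) l (𝓝 (‖y‖₊ : ℝ≥0∞)) :=
      (ENNReal.continuous_coe.tendsto _).comp hy.nnnorm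
    exact le_of_tendsto (ENNReal.Tendsto.const_mul hnn (Or.inr ha)) h

/-- If `Y` is a Banach space and for every compact `K ⊆ U` some weight
`f_K ∈ W` is bounded away from `0` on `K`, then `C^0_W(U,Y)` is complete: every Cauchy
filter (for the weighted seminorm uniformity) converges in `C^0_W(U,Y)`. -/
theorem stmt2 {Y : Type*} [NormedAddCommGroup Y] [NormedSpace ℝ Y] [CompleteSpace Y]
    (U : Set X) (hU : IsOpen U) (hne : U.Nonempty)
    (W : Set (X → EReal))
    (hW : ∀ K : Set X, K ⊆ U → IsCompact K →
      ∃ f ∈ W, ∃ c : ℝ≥0∞, 0 < c ∧ ∀ x ∈ K, c ≤ (f x).abs) :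
    ∀ l : Filter {γ : X → Y // MemCW U W 0 γ}, l.NeBot →
      (∀ f ∈ W, ∀ ε : ℝ≥0∞, 0 < ε →
        ∃ s ∈ l, ∀ γ ∈ s, ∀ η ∈ s, wSemi U f 0 (γ.1 - η.1) < ε) →
      ∃ γ₀ : {γ : X → Y // MemCW U W 0 γ},
        ∀ f ∈ W, ∀ ε : ℝ≥0∞, 0 < ε →
          ∃ s ∈ l, ∀ γ ∈ s, wSemi U f 0 (γ.1 - γ₀.1) < ε := by
  intro l hlne hC
  haveI := hlne
  haveI : Nonempty Y := ⟨0⟩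
  -- pointwise Cauchy
  have hcau : ∀ x ∈ U, Cauchy (l.map fun γ : {γ : X → Y // MemCW U W 0 γ} => γ.1 x) := by
    intro x hx
    obtain ⟨f, hfW, c, hc, hcf⟩ := hW {x} (singleton_subset_iff.mpr hx) isCompact_singleton
    rw [Metric.cauchy_iff]
    refine ⟨hlne.map _, fun ε hε => ?_⟩
    have hε' : 0 < min c 1 * ENNReal.ofReal ε :=
      ENNReal.mul_pos (min_one_ne_zero hc) (by simpa using hε)
    obtain ⟨s, hs, hpair⟩ := hC f hfW _ hε'
    refine ⟨(fun γ : {γ : X → Y // MemCW U W 0 γ} => γ.1 x) '' s, image_mem_map hs, ?_⟩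
    rintro _ ⟨γ, hγ, rfl⟩ _ ⟨η, hη, rfl⟩
    have h1 : (f x).abs * (‖(γ.1 - η.1) x‖₊ : ℝ≥0∞) ≤ wSemi U f 0 (γ.1 - η.1) :=
      le_wSemi_zero f _ hx
    have h2 := lt_of_le_of_lt h1 (hpair γ hγ η hη)
    have h3 : (‖γ.1 x - η.1 x‖₊ : ℝ≥0∞) < ENNReal.ofReal ε :=
      ennreal_cancel hc (hcf x rfl) (by simpa using h2)
    rw [← enorm_eq_nnnorm, ← edist_eq_enorm_sub] at h3
    exact edist_lt_ofReal.mp h3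
  -- the pointwise limit
  set γ₀f : X → Y := fun x => limUnder l (fun γ : {γ : X → Y // MemCW U W 0 γ} => γ.1 x)
    with hγ₀f
  have htend : ∀ x ∈ U,
      Tendsto (fun γ : {γ : X → Y // MemCW U W 0 γ} => γ.1 x) l (𝓝 (γ₀f x)) := by
    intro x hx
    obtain ⟨y, hy⟩ := CompleteSpace.complete (hcau x hx)
    have hy' : Tendsto (fun γ : {γ : X → Y // MemCW U W 0 γ} => γ.1 x) l (𝓝 y) := hy
    have : γ₀f x = y := hy'.limUnder_eq
    rwa [this]
  -- key convergence bound
  have hconv : ∀ f ∈ W, ∀ ε : ℝ≥0∞, 0 < ε → ε ≠ ⊤ →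
      ∃ s ∈ l, ∀ γ ∈ s, wSemi U f 0 (γ.1 - γ₀f) ≤ ε := by
    intro f hfW ε hε hεt
    obtain ⟨s, hs, hpair⟩ := hC f hfW ε hε
    refine ⟨s, hs, fun γ hγ => ?_⟩
    refine wSemi_zero_le fun x hx => ?_
    have hF : Tendsto (fun η : {γ : X → Y // MemCW U W 0 γ} => γ.1 x - η.1 x) l
        (𝓝 (γ.1 x - γ₀f x)) := tendsto_const_nhds.sub (htend x hx)
    have hev : ∀ᶠ η : {γ : X → Y // MemCW U W 0 γ} in l,
        (f x).abs * (‖γ.1 x - η.1 x‖₊ : ℝ≥0∞) ≤ ε := by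
      refine eventually_of_mem hs fun η hη => ?_
      have h1 : (f x).abs * (‖(γ.1 - η.1) x‖₊ : ℝ≥0∞) ≤ wSemi U f 0 (γ.1 - η.1) :=
        le_wSemi_zero f _ hx
      exact le_of_lt (by simpa using lt_of_le_of_lt h1 (hpair γ hγ η hη))
    have := mul_nnnorm_le_of_tendsto hF hεt hev
    simpa using this
  -- uniform convergence on compact subsets
  have hunif : ∀ K ⊆ U, IsCompact K →
      TendstoUniformlyOn (fun (γ : {γ : X → Y // MemCW U W 0 γ}) x => γ.1 x) γ₀f l K := by
    intro K hKU hK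
    obtain ⟨f, hfW, c, hc, hcf⟩ := hW K hKU hK
    rw [Metric.tendstoUniformlyOn_iff]
    intro ε hε
    have hhalf : (0:ℝ) < ε / 2 := by linarith
    have hpos : 0 < min c 1 * ENNReal.ofReal (ε / 2) :=
      ENNReal.mul_pos (min_one_ne_zero hc) (by simpa using hhalf)
    have hfin : min c 1 * ENNReal.ofReal (ε / 2) ≠ ⊤ :=
      ENNReal.mul_ne_top (ne_top_of_le_ne_top ENNReal.one_ne_top (min_le_right _ _))
        ENNReal.ofReal_ne_top
    obtain ⟨s, hs, hbd⟩ := hconv f hfW _ hpos hfin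
    refine eventually_of_mem hs fun γ hγ x hx => ?_
    have h1 : (f x).abs * (‖(γ.1 - γ₀f) x‖₊ : ℝ≥0∞) ≤ wSemi U f 0 (γ.1 - γ₀f) :=
      le_wSemi_zero f _ (hKU hx)
    have hlt : min c 1 * ENNReal.ofReal (ε / 2) < min c 1 * ENNReal.ofReal ε := by
      rw [ENNReal.mul_lt_mul_iff_right (min_one_ne_zero hc)
        (ne_top_of_le_ne_top ENNReal.one_ne_top (min_le_right _ _))]
      exact ENNReal.ofReal_lt_ofReal_iff hε |>.mpr (by linarith)
    have h2 : (f x).abs * (‖(γ.1 - γ₀f) x‖₊ : ℝ≥0∞) < min c 1 * ENNReal.ofReal ε :=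
      lt_of_le_of_lt (h1.trans (hbd γ hγ)) hlt
    have h3 := ennreal_cancel hc (hcf x hx) h2
    have h4 : (‖γ.1 x - γ₀f x‖₊ : ℝ≥0∞) < ENNReal.ofReal ε := by simpa using h3
    rw [← enorm_eq_nnnorm, ← edist_eq_enorm_sub] at h4
    have := edist_lt_ofReal.mp h4
    rwa [dist_comm] at this
  -- continuity on compact subsets
  have hKcont : ∀ K ⊆ U, IsCompact K → ContinuousOn γ₀f K := fun K hKU hK =>
    (hunif K hKU hK).continuousOn
      (Eventually.of_forall fun γ => (contDiffOn_zero.mp γ.2.1).mono hKU).frequently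
  -- continuity on U, via sequences
  have hcont : ContinuousOn γ₀f U := by
    intro x hx
    rw [ContinuousWithinAt, tendsto_iff_seq_tendsto]
    intro u hu
    have huU : ∀ᶠ n in atTop, u n ∈ U :=
      hu (eventually_mem_nhdsWithin.mono fun _ h => h)
    obtain ⟨N, hN⟩ := eventually_atTop.mp huU
    set v : ℕ → X := fun n => u (n + N) with hv_def
    have hv : Tendsto v atTop (𝓝 x) :=
      (tendsto_add_atTop_iff_nat N).mpr (hu.mono_right nhdsWithin_le_nhds)
    set K := insert x (Set.range v) with hK_def
    have hKc : IsCompact K := hv.isCompact_insert_range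
    have hKU : K ⊆ U :=
      insert_subset hx (range_subset_iff.mpr fun n => hN _ (Nat.le_add_left N n))
    have hcK : ContinuousWithinAt γ₀f K x := hKcont K hKU hKc x (mem_insert _ _)
    have hvK : Tendsto v atTop (𝓝[K] x) :=
      tendsto_nhdsWithin_of_tendsto_nhds_of_eventually_within _ hv
        (Eventually.of_forall fun n => subset_insert _ _ (mem_range_self n))
    have hcomp : Tendsto (γ₀f ∘ v) atTop (𝓝 (γ₀f x)) := hcK.tendsto.comp hvK
    exact (tendsto_add_atTop_iff_nat N).mp hcomp
  -- membership of the limit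
  have hmem : MemCW U W 0 γ₀f := by
    refine ⟨contDiffOn_zero.mpr hcont, fun f hfW ℓ hℓ => ?_⟩
    have hℓ0 : ℓ = 0 := by exact_mod_cast nonpos_iff_eq_zero.mp hℓ
    subst hℓ0
    obtain ⟨s, hs, hbd⟩ := hconv f hfW 1 one_pos ENNReal.one_ne_top
    obtain ⟨γ, hγ⟩ := Filter.nonempty_of_mem hs
    have hγfin : wSemi U f 0 γ.1 < ⊤ := γ.2.2 f hfW 0 le_rfl
    have hle : wSemi U f 0 γ₀f ≤ 1 + wSemi U f 0 γ.1 := by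
      refine wSemi_zero_le fun x hx => ?_
      have e1 : (f x).abs * (‖γ₀f x‖₊ : ℝ≥0∞)
          ≤ (f x).abs * (‖γ₀f x - γ.1 x‖₊ : ℝ≥0∞) + (f x).abs * (‖γ.1 x‖₊ : ℝ≥0∞) := by
        rw [← mul_add]
        refine mul_le_mul_right ?_ _
        have htri : ‖γ₀f x‖₊ ≤ ‖γ₀f x - γ.1 x‖₊ + ‖γ.1 x‖₊ := by
          simpa using nnnorm_add_le (γ₀f x - γ.1 x) (γ.1 x)
        exact_mod_cast htri
      have e2 : (f x).abs * (‖γ₀f x - γ.1 x‖₊ : ℝ≥0∞) ≤ 1 := by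
        have h1 := (le_wSemi_zero f (γ.1 - γ₀f) hx).trans (hbd γ hγ)
        have : ‖γ₀f x - γ.1 x‖₊ = ‖(γ.1 - γ₀f) x‖₊ := by
          rw [Pi.sub_apply, ← nnnorm_neg, neg_sub]
        rw [this]
        simpa using h1
      have e3 : (f x).abs * (‖γ.1 x‖₊ : ℝ≥0∞) ≤ wSemi U f 0 γ.1 := le_wSemi_zero f _ hx
      exact e1.trans (add_le_add e2 e3)
    exact lt_of_le_of_lt hle (ENNReal.add_lt_top.mpr ⟨ENNReal.one_lt_top, hγfin⟩)
  -- conclusion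
  refine ⟨⟨γ₀f, hmem⟩, fun f hfW ε hε => ?_⟩
  have hex : ∃ ε' : ℝ≥0∞, 0 < ε' ∧ ε' ≠ ⊤ ∧ ε' < ε := by
    rcases eq_or_ne ε ⊤ with rfl | hεt
    · exact ⟨1, one_pos, ENNReal.one_ne_top, ENNReal.one_lt_top⟩
    · exact ⟨ε / 2, ENNReal.half_pos hε.ne',
        ne_top_of_lt (ENNReal.half_lt_self hε.ne' hεt),
        ENNReal.half_lt_self hε.ne' hεt⟩
  obtain ⟨ε', hε'0, hε't, hε'ε⟩ := hex
  obtain ⟨s, hs, hbd⟩ := hconv f hfW ε' hε'0 hε't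
  exact ⟨s, hs, fun γ hγ => lt_of_le_of_lt (hbd γ hγ) hε'ε⟩
end
end

section
/- Let X be a normed space, U ⊆ X open nonempty, Y a Banach space, k ∈ ℕ∪{∞}, and W a set of weights containing the constant function 1 on U. Then the weighted function space C^k_W(U,Y) is complete; in particular, the space BC^k(U,Y) of bounded C^k functions with bounded derivatives up to order k is complete. -/
open Filter Topology Set
open scoped ENNReal NNReal

noncomputable section

variable {X : Type*} [NormedAddCommGroup X] [NormedSpace ℝ X]

/-! ### Auxiliary lemmas -/

lemma EReal_abs_one : (1 : EReal).abs = 1 := by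
  rw [show (1 : EReal) = ((1 : ℝ) : EReal) by norm_cast, EReal.abs_def]
  simp

lemma le_wSemi {Y : Type*} [NormedAddCommGroup Y] [NormedSpace ℝ Y]
    {U : Set X} {f : X → EReal} {ℓ : ℕ} {γ : X → Y} {x : X} (hx : x ∈ U) :
    (f x).abs * (‖iteratedFDeriv ℝ ℓ γ x‖₊ : ℝ≥0∞) ≤ wSemi U f ℓ γ :=
  le_iSup₂ (f := fun x (_ : x ∈ U) => (f x).abs * (‖iteratedFDeriv ℝ ℓ γ x‖₊ : ℝ≥0∞)) x hx

lemma iteratedFDeriv_sub_on {Y : Type*} [NormedAddCommGroup Y] [NormedSpace ℝ Y]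
    {U : Set X} (hU : IsOpen U) {k : ℕ∞} {ℓ : ℕ} (hℓ : (ℓ : ℕ∞) ≤ k)
    {γ η : X → Y} (hγ : ContDiffOn ℝ k γ U) (hη : ContDiffOn ℝ k η U) {x : X} (hx : x ∈ U) :
    iteratedFDeriv ℝ ℓ (γ - η) x = iteratedFDeriv ℝ ℓ γ x - iteratedFDeriv ℝ ℓ η x := by
  have hγ' : ContDiffOn ℝ ℓ γ U := hγ.of_le (by exact_mod_cast hℓ)
  have hη' : ContDiffOn ℝ ℓ η U := hη.of_le (by exact_mod_cast hℓ)
  rw [← iteratedFDerivWithin_of_isOpen (𝕜 := ℝ) (f := γ - η) ℓ hU hx,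
      ← iteratedFDerivWithin_of_isOpen (𝕜 := ℝ) (f := γ) ℓ hU hx,
      ← iteratedFDerivWithin_of_isOpen (𝕜 := ℝ) (f := η) ℓ hU hx]
  have hneg : ContDiffOn ℝ (ℓ : ℕ∞) (-η) U := hη'.neg
  have h : γ - η = γ + -η := by funext y; simp [sub_eq_add_neg]
  rw [h, iteratedFDerivWithin_add_apply (hγ' x hx) (hneg x hx) hU.uniqueDiffOn hx,
      iteratedFDerivWithin_neg_apply hU.uniqueDiffOn hx, sub_eq_add_neg]

lemma mul_le_of_tendsto' {ι : Type*} {b : Filter ι} [b.NeBot] {a M : ℝ≥0∞}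
    {c : ι → ℝ≥0} {c₀ : ℝ≥0} (h : Tendsto c b (𝓝 c₀))
    (hb : ∀ᶠ i in b, a * (c i : ℝ≥0∞) ≤ M) : a * (c₀ : ℝ≥0∞) ≤ M := by
  rcases eq_or_ne a ⊤ with rfl | ha
  · rcases eq_or_ne c₀ 0 with rfl | hc
    · simp
    · have hev : ∀ᶠ i in b, c i ≠ 0 :=
        h (isOpen_ne.mem_nhds (by simpa using hc))
      obtain ⟨i, hi1, hi2⟩ := (hb.and hev).exists
      have hM : M = ⊤ := by
        have : (⊤ : ℝ≥0∞) * (c i : ℝ≥0∞) = ⊤ :=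
          ENNReal.top_mul (by exact_mod_cast hi2)
        exact top_le_iff.1 (this ▸ hi1)
      simp [hM]
  · have ht : Tendsto (fun i => a * (c i : ℝ≥0∞)) b (𝓝 (a * (c₀ : ℝ≥0∞))) :=
      ENNReal.Tendsto.const_mul (ENNReal.tendsto_coe.2 h) (Or.inr ha)
    exact le_of_tendsto ht hb

lemma coe_lt_ofReal' {c : ℝ≥0} {ε : ℝ} (hε : 0 < ε) (h : (c : ℝ≥0∞) < ENNReal.ofReal ε) :
    (c : ℝ) < ε := by
  rw [ENNReal.ofReal, ENNReal.coe_lt_coe] at h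
  calc (c : ℝ) < (ε.toNNReal : ℝ) := NNReal.coe_lt_coe.2 h
    _ = ε := Real.coe_toNNReal _ hε.le

/-- If `Y` is a Banach space, `k ∈ ℕ∪{∞}` and the set of weights `W` contains
the constant function `1` on `U`, then `C^k_W(U,Y)` is complete: every Cauchy filter for the
weighted seminorm uniformity converges.  (In particular `BC^k(U,Y)`, the case `W = {1_U}`,
is complete.) -/
theorem stmt3 {Y : Type*} [NormedAddCommGroup Y] [NormedSpace ℝ Y] [CompleteSpace Y]
    (U : Set X) (hU : IsOpen U) (hne : U.Nonempty)
    (W : Set (X → EReal)) (k : ℕ∞)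
    (h1 : (fun _ : X => (1 : EReal)) ∈ W) :
    ∀ l : Filter {γ : X → Y // MemCW U W k γ}, l.NeBot →
      (∀ f ∈ W, ∀ ℓ : ℕ, (ℓ : ℕ∞) ≤ k → ∀ ε : ℝ≥0∞, 0 < ε →
        ∃ s ∈ l, ∀ γ ∈ s, ∀ η ∈ s, wSemi U f ℓ (γ.1 - η.1) < ε) →
      ∃ γ₀ : {γ : X → Y // MemCW U W k γ},
        ∀ f ∈ W, ∀ ℓ : ℕ, (ℓ : ℕ∞) ≤ k → ∀ ε : ℝ≥0∞, 0 < ε →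
          ∃ s ∈ l, ∀ γ ∈ s, wSemi U f ℓ (γ.1 - γ₀.1) < ε := by
  intro l hl hcau
  haveI := hl
  -- Step A : unweighted Cauchy estimates
  have key : ∀ ℓ : ℕ, (ℓ : ℕ∞) ≤ k → ∀ ε : ℝ≥0∞, 0 < ε →
      ∃ s ∈ l, ∀ γ ∈ s, ∀ η ∈ s, ∀ x ∈ U,
        (‖iteratedFDeriv ℝ ℓ γ.1 x - iteratedFDeriv ℝ ℓ η.1 x‖₊ : ℝ≥0∞) < ε := by
    intro ℓ hℓ ε hε
    obtain ⟨s, hs, hsub⟩ := hcau _ h1 ℓ hℓ ε hε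
    refine ⟨s, hs, fun γ hγ η hη x hx => ?_⟩
    have h2 := (le_wSemi (f := fun _ : X => (1 : EReal)) (ℓ := ℓ) (γ := γ.1 - η.1) hx).trans_lt
      (hsub γ hγ η hη)
    rwa [EReal_abs_one, one_mul, iteratedFDeriv_sub_on hU hℓ γ.2.1 η.2.1 hx] at h2
  -- Step B : pointwise limits
  let G : ∀ ℓ : ℕ, X → (X [×ℓ]→L[ℝ] Y) := fun ℓ x =>
    lim (l.map fun γ : {γ : X → Y // MemCW U W k γ} => iteratedFDeriv ℝ ℓ γ.1 x)
  have htend : ∀ ℓ : ℕ, (ℓ : ℕ∞) ≤ k → ∀ x ∈ U,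
      Tendsto (fun γ : {γ : X → Y // MemCW U W k γ} => iteratedFDeriv ℝ ℓ γ.1 x) l
        (𝓝 (G ℓ x)) := by
    intro ℓ hℓ x hx
    have hc : Cauchy (l.map fun γ : {γ : X → Y // MemCW U W k γ} =>
        iteratedFDeriv ℝ ℓ γ.1 x) := by
      rw [Metric.cauchy_iff]
      refine ⟨map_neBot, fun ε hε => ?_⟩
      obtain ⟨s, hs, hsub⟩ := key ℓ hℓ (ENNReal.ofReal ε) (ENNReal.ofReal_pos.2 hε)
      refine ⟨(fun γ : {γ : X → Y // MemCW U W k γ} => iteratedFDeriv ℝ ℓ γ.1 x) '' s,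
        image_mem_map hs, ?_⟩
      rintro a ⟨γ, hγ, rfl⟩ b ⟨η, hη, rfl⟩
      have h3 := hsub γ hγ η hη x hx
      rw [dist_eq_norm]
      exact coe_lt_ofReal' hε h3
    exact hc.le_nhds_lim
  -- Step C : uniform convergence on U
  have hunif : ∀ ℓ : ℕ, (ℓ : ℕ∞) ≤ k →
      TendstoUniformlyOn (fun γ : {γ : X → Y // MemCW U W k γ} => fun x =>
        iteratedFDeriv ℝ ℓ γ.1 x) (G ℓ) l U := by
    intro ℓ hℓ
    rw [Metric.tendstoUniformlyOn_iff]
    intro ε hε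
    obtain ⟨s, hs, hsub⟩ := key ℓ hℓ (ENNReal.ofReal (ε / 2)) (ENNReal.ofReal_pos.2 (by linarith))
    filter_upwards [hs] with γ hγ x hx
    have htd : Tendsto (fun η : {γ : X → Y // MemCW U W k γ} =>
        dist (iteratedFDeriv ℝ ℓ η.1 x) (iteratedFDeriv ℝ ℓ γ.1 x)) l
        (𝓝 (dist (G ℓ x) (iteratedFDeriv ℝ ℓ γ.1 x))) :=
      (htend ℓ hℓ x hx).dist tendsto_const_nhds
    have hle : dist (G ℓ x) (iteratedFDeriv ℝ ℓ γ.1 x) ≤ ε / 2 := by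
      refine le_of_tendsto htd ?_
      filter_upwards [hs] with η hη
      rw [dist_eq_norm]
      exact (coe_lt_ofReal' (by linarith) (hsub η hη γ hγ x hx)).le
    linarith
  -- continuity of iterated derivatives of members
  have contOn : ∀ (γ : {γ : X → Y // MemCW U W k γ}) (m : ℕ), (m : ℕ∞) ≤ k →
      ContinuousOn (fun x => iteratedFDeriv ℝ m γ.1 x) U := by
    intro γ m hm
    have h := (γ.2.1.ftaylorSeriesWithin hU.uniqueDiffOn).cont m (by exact_mod_cast hm)
    exact h.congr fun y hy => (iteratedFDerivWithin_of_isOpen m hU hy).symm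
  -- each member's iterated derivative has the expected derivative
  have hderiv : ∀ m : ℕ, ((m + 1 : ℕ) : ℕ∞) ≤ k → ∀ γ : {γ : X → Y // MemCW U W k γ},
      ∀ x ∈ U, HasFDerivAt (fun y => iteratedFDeriv ℝ m γ.1 y)
        (iteratedFDeriv ℝ (m + 1) γ.1 x).curryLeft x := by
    intro m hm γ x hx
    have ht := γ.2.1.ftaylorSeriesWithin hU.uniqueDiffOn
    have hm' : ((m : ℕ∞) : WithTop ℕ∞) < (k : WithTop ℕ∞) := by
      have h5 : (m : ℕ∞) < ((m + 1 : ℕ) : ℕ∞) := by exact_mod_cast Nat.lt_succ_self m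
      exact_mod_cast h5.trans_le hm
    have H := ht.fderivWithin m hm' x hx
    have H2 := H.hasFDerivAt (hU.mem_nhds hx)
    have heq : (fun y => iteratedFDerivWithin ℝ m γ.1 U y) =ᶠ[𝓝 x]
        fun y => iteratedFDeriv ℝ m γ.1 y :=
      eventually_of_mem (hU.mem_nhds hx) fun y hy => iteratedFDerivWithin_of_isOpen m hU hy
    have H3 := H2.congr_of_eventuallyEq heq.symm
    have h6 : iteratedFDerivWithin ℝ (m + 1) γ.1 U x = iteratedFDeriv ℝ (m + 1) γ.1 x :=
      iteratedFDerivWithin_of_isOpen (m + 1) hU hx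
    rw [show ftaylorSeriesWithin ℝ γ.1 U x m.succ = iteratedFDerivWithin ℝ (m + 1) γ.1 U x
      from rfl, h6] at H3
    exact H3
  -- derivative of the limit
  have hTderiv : ∀ m : ℕ, (m : ℕ∞) < k → ∀ x ∈ U,
      HasFDerivAt (G m) ((G (m + 1) x).curryLeft) x := by
    intro m hm x hx
    have hm1 : ((m + 1 : ℕ) : ℕ∞) ≤ k := by
      push_cast
      exact Order.add_one_le_of_lt hm
    have hunif' := (continuousMultilinearCurryLeftEquiv ℝ (fun _ : Fin (m + 1) => X)
      Y).isometry.uniformContinuous.comp_tendstoUniformlyOn (hunif (m + 1) hm1)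
    exact hasFDerivAt_of_tendstoUniformlyOn hU hunif'
      (fun γ x hx => hderiv m hm1 γ x hx) (fun x hx => htend m hm.le x hx) hx
  -- Taylor series of the limit
  have hTaylor : HasFTaylorSeriesUpToOn (k : ℕ∞) (fun x => (G 0 x).curry0)
      (fun x ℓ => G ℓ x) U := by
    refine ⟨fun x _ => rfl, fun m hm x hx => ?_, fun m hm => ?_⟩
    · exact (hTderiv m (by exact_mod_cast hm) x hx).hasFDerivWithinAt
    · have hm' : (m : ℕ∞) ≤ k := by exact_mod_cast hm
      exact (hunif m hm').continuousOn
        (Eventually.of_forall fun γ => contOn γ m hm').frequently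
  set g : X → Y := fun x => (G 0 x).curry0 with hgdef
  have hg : ContDiffOn ℝ k g U := hTaylor.contDiffOn
  have hGeq : ∀ ℓ : ℕ, (ℓ : ℕ∞) ≤ k → ∀ x ∈ U, iteratedFDeriv ℝ ℓ g x = G ℓ x := by
    intro ℓ hℓ x hx
    rw [← iteratedFDerivWithin_of_isOpen (𝕜 := ℝ) (f := g) ℓ hU hx]
    exact (hTaylor.eq_iteratedFDerivWithin_of_uniqueDiffOn (by exact_mod_cast hℓ)
      hU.uniqueDiffOn hx).symm
  -- Step D : the limit lies in the space
  have hfin : ∀ f ∈ W, ∀ ℓ : ℕ, (ℓ : ℕ∞) ≤ k → wSemi U f ℓ g < ⊤ := by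
    intro f hf ℓ hℓ
    obtain ⟨s, hs, hsub⟩ := hcau f hf ℓ hℓ 1 zero_lt_one
    obtain ⟨η, hη⟩ := Filter.nonempty_of_mem hs
    have hbound : ∀ x ∈ U,
        (f x).abs * (‖G ℓ x - iteratedFDeriv ℝ ℓ η.1 x‖₊ : ℝ≥0∞) ≤ 1 := by
      intro x hx
      refine mul_le_of_tendsto' (((htend ℓ hℓ x hx).sub tendsto_const_nhds).nnnorm) ?_
      filter_upwards [hs] with γ hγ
      have h4 := (le_wSemi (f := f) (ℓ := ℓ) (γ := γ.1 - η.1) hx).trans_lt (hsub γ hγ η hη)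
      rw [iteratedFDeriv_sub_on hU hℓ γ.2.1 η.2.1 hx] at h4
      exact h4.le
    have hb2 : wSemi U f ℓ g ≤ 1 + wSemi U f ℓ η.1 := by
      refine iSup₂_le fun x hx => ?_
      rw [hGeq ℓ hℓ x hx]
      have htri : (‖G ℓ x‖₊ : ℝ≥0∞) ≤
          (‖G ℓ x - iteratedFDeriv ℝ ℓ η.1 x‖₊ : ℝ≥0∞) + ‖iteratedFDeriv ℝ ℓ η.1 x‖₊ := by
        have := nnnorm_add_le (G ℓ x - iteratedFDeriv ℝ ℓ η.1 x) (iteratedFDeriv ℝ ℓ η.1 x)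
        rw [sub_add_cancel] at this
        exact_mod_cast this
      calc (f x).abs * (‖G ℓ x‖₊ : ℝ≥0∞)
          ≤ (f x).abs * ((‖G ℓ x - iteratedFDeriv ℝ ℓ η.1 x‖₊ : ℝ≥0∞)
            + ‖iteratedFDeriv ℝ ℓ η.1 x‖₊) := mul_le_mul_right htri _
        _ = (f x).abs * (‖G ℓ x - iteratedFDeriv ℝ ℓ η.1 x‖₊ : ℝ≥0∞)
            + (f x).abs * ‖iteratedFDeriv ℝ ℓ η.1 x‖₊ := mul_add _ _ _
        _ ≤ 1 + wSemi U f ℓ η.1 := add_le_add (hbound x hx) (le_wSemi hx)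
    exact hb2.trans_lt (ENNReal.add_lt_top.2 ⟨ENNReal.one_lt_top, η.2.2 f hf ℓ hℓ⟩)
  refine ⟨⟨g, hg, hfin⟩, ?_⟩
  -- Step E : convergence to the limit
  intro f hf ℓ hℓ ε hε
  obtain ⟨δ, hδ0, hδε⟩ := exists_between hε
  obtain ⟨s, hs, hsub⟩ := hcau f hf ℓ hℓ δ hδ0
  refine ⟨s, hs, fun γ hγ => ?_⟩
  have hb3 : wSemi U f ℓ (γ.1 - g) ≤ δ := by
    refine iSup₂_le fun x hx => ?_
    rw [iteratedFDeriv_sub_on hU hℓ γ.2.1 hg hx, hGeq ℓ hℓ x hx]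
    refine mul_le_of_tendsto'
      ((tendsto_const_nhds.sub (htend ℓ hℓ x hx)).nnnorm
        (f := fun η : {γ : X → Y // MemCW U W k γ} =>
          iteratedFDeriv ℝ ℓ γ.1 x - iteratedFDeriv ℝ ℓ η.1 x)) ?_
    filter_upwards [hs] with η hη
    have h4 := (le_wSemi (f := f) (ℓ := ℓ) (γ := γ.1 - η.1) hx).trans_lt (hsub γ hγ η hη)
    rw [iteratedFDeriv_sub_on hU hℓ γ.2.1 η.2.1 hx] at h4
    exact h4.le
  exact hb3.trans_lt hδε
end
end

section
/- Let E and F be Banach spaces and φ ∈ FC^1(E,F) such that Dφ(x) is invertible for every x ∈ E and there exists K ∈ ℝ with ‖Dφ(x)^{-1}‖_op ≤ K for all x ∈ E. Then φ is a surjective homeomorphism from E onto F. -/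
open Set Metric Filter Topology

set_option linter.unusedSectionVars false
set_option maxHeartbeats 1000000

section HadamardAux


variable {E F : Type*} [NormedAddCommGroup E] [NormedSpace ℝ E] [CompleteSpace E]
  [NormedAddCommGroup F] [NormedSpace ℝ F] [CompleteSpace F] {φ : E → F}

lemma aux_localHomeo (hs : ∀ x : E, ∃ e : E ≃L[ℝ] F, HasStrictFDerivAt φ (e : E →L[ℝ] F) x) :
    IsLocalHomeomorph φ := by
  intro x
  obtain ⟨e, he⟩ := hs x
  exact ⟨he.toOpenPartialHomeomorph φ, he.mem_toOpenPartialHomeomorph_source,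
    (he.toOpenPartialHomeomorph_coe).symm⟩

lemma aux_uniq (hl : IsLocalHomeomorph φ) {s : Set ℝ} (hs : IsPreconnected s) {γ₁ γ₂ : ℝ → E}
    (h₁ : ContinuousOn γ₁ s) (h₂ : ContinuousOn γ₂ s) (he : EqOn (φ ∘ γ₁) (φ ∘ γ₂) s)
    {a : ℝ} (ha : a ∈ s) (h0 : γ₁ a = γ₂ a) : EqOn γ₁ γ₂ s :=
  (T2Space.isSeparatedMap φ).eqOn_of_comp_eqOn hl.isLocallyInjective hs h₁ h₂ he ha h0

lemma aux_lip {K : ℝ}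
    (hd : ∀ x : E, ∃ e : E ≃L[ℝ] F, HasStrictFDerivAt φ (e : E →L[ℝ] F) x ∧
      ‖(e.symm : F →L[ℝ] E)‖ ≤ K)
    (z : F) (v : F) {T : ℝ} {γ : ℝ → E} (hc : ContinuousOn γ (Icc 0 T))
    (hl : ∀ t ∈ Icc (0:ℝ) T, φ (γ t) = z + t • v) :
    LipschitzOnWith (K * ‖v‖).toNNReal γ (Icc 0 T) := by
  apply (convex_Icc (0:ℝ) T).lipschitzOnWith_of_nnnorm_hasDerivWithin_le
    (f' := fun t => ((hd (γ t)).choose.symm : F →L[ℝ] E) v)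
  · intro t₀ ht₀
    set e := (hd (γ t₀)).choose with hedef
    obtain ⟨he, hKe⟩ := (hd (γ t₀)).choose_spec
    set g := he.localInverse φ e (γ t₀) with hgdef
    have hev : ∀ᶠ x' in 𝓝 (γ t₀), g (φ x') = x' := he.eventually_left_inverse
    have hγx : φ (γ t₀) = z + t₀ • v := hl t₀ ht₀
    have heq : γ =ᶠ[𝓝[Icc 0 T] t₀] (fun t => g (z + t • v)) := by
      filter_upwards [(hc t₀ ht₀).eventually hev, eventually_mem_nhdsWithin] with t h1 h2
      rw [← h1, hl t h2]
    have hline : HasDerivWithinAt (fun t : ℝ => z + t • v) v (Icc 0 T) t₀ := by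
      simpa using (((hasDerivAt_id t₀).smul_const v).const_add z).hasDerivWithinAt
    have hinv : HasFDerivAt g (e.symm : F →L[ℝ] E) (z + t₀ • v) := by
      rw [← hγx]; exact he.to_localInverse.hasFDerivAt
    have hcomp : HasDerivWithinAt (fun t => g (z + t • v)) ((e.symm : F →L[ℝ] E) v)
        (Icc 0 T) t₀ := hinv.comp_hasDerivWithinAt t₀ hline
    exact hcomp.congr_of_eventuallyEq heq (by rw [← hγx]; exact hev.self_of_nhds.symm)
  · intro t ht
    obtain ⟨he, hKe⟩ := (hd (γ t)).choose_spec
    rw [← norm_toNNReal]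
    apply Real.toNNReal_le_toNNReal
    calc ‖((hd (γ t)).choose.symm : F →L[ℝ] E) v‖ ≤ ‖((hd (γ t)).choose.symm : F →L[ℝ] E)‖ * ‖v‖ :=
          ContinuousLinearMap.le_opNorm _ _
    _ ≤ K * ‖v‖ := mul_le_mul_of_nonneg_right hKe (norm_nonneg v)



lemma aux_div (c : ℝ) : Filter.Tendsto (fun n : ℕ => c / ((n:ℝ) + 1)) atTop (𝓝 0) := by
  have h := (tendsto_const_div_atTop_nhds_zero_nat c).comp (tendsto_add_atTop_nat 1)
  refine h.congr fun n => ?_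
  simp only [Function.comp]
  push_cast
  ring


lemma aux_lift {K : ℝ}
    (hd : ∀ x : E, ∃ e : E ≃L[ℝ] F, HasStrictFDerivAt φ (e : E →L[ℝ] F) x ∧
      ‖(e.symm : F →L[ℝ] E)‖ ≤ K)
    (x₀ : E) (v : F) :
    ∃ γ : ℝ → E, ContinuousOn γ (Icc 0 1) ∧ γ 0 = x₀ ∧
      ∀ t ∈ Icc (0:ℝ) 1, φ (γ t) = φ x₀ + t • v := by
  have hloc : IsLocalHomeomorph φ :=
    aux_localHomeo (fun x => ⟨(hd x).choose, (hd x).choose_spec.1⟩)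
  have hφc : Continuous φ := continuous_iff_continuousAt.mpr
    (fun x => (hd x).choose_spec.1.continuousAt)
  set z := φ x₀ with hz
  set C : NNReal := (K * ‖v‖).toNNReal with hC
  set P : ℝ → (ℝ → E) → Prop := fun T γ =>
    ContinuousOn γ (Icc 0 T) ∧ γ 0 = x₀ ∧ ∀ t ∈ Icc (0:ℝ) T, φ (γ t) = z + t • v with hP
  set S : Set ℝ := {T | T ∈ Icc (0:ℝ) 1 ∧ ∃ γ, P T γ} with hS
  have huniq : ∀ T, 0 ≤ T → ∀ γ₁ γ₂, P T γ₁ → P T γ₂ → EqOn γ₁ γ₂ (Icc 0 T) := by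
    intro T hT γ₁ γ₂ h1 h2
    exact aux_uniq hloc isPreconnected_Icc h1.1 h2.1
      (fun t ht => by simp only [Function.comp_apply, h1.2.2 t ht, h2.2.2 t ht])
      (left_mem_Icc.mpr hT) (h1.2.1.trans h2.2.1.symm)
  have h0S : (0:ℝ) ∈ S := by
    refine ⟨⟨le_refl 0, zero_le_one⟩, fun _ => x₀, continuousOn_const, rfl, fun t ht => ?_⟩
    obtain rfl : t = 0 := le_antisymm ht.2 ht.1
    simp [hz]
  have hdc : ∀ T' ∈ S, ∀ t ∈ Icc (0:ℝ) T', t ∈ S := by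
    intro T' hT' t ht
    obtain ⟨hT'm, γ, hγ⟩ := hT'
    exact ⟨⟨ht.1, ht.2.trans hT'm.2⟩, γ, hγ.1.mono (Icc_subset_Icc le_rfl ht.2), hγ.2.1,
      fun r hr => hγ.2.2 r ⟨hr.1, hr.2.trans ht.2⟩⟩
  have hbdd : BddAbove S := ⟨1, fun T' hT' => hT'.1.2⟩
  set T := sSup S with hT
  have hT0 : 0 ≤ T := le_csSup hbdd h0S
  have hT1 : T ≤ 1 := csSup_le ⟨0, h0S⟩ (fun T' hT' => hT'.1.2)
  have hGex : ∀ T' : ℝ, ∃ γ, T' ∈ S → P T' γ := by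
    intro T'
    by_cases hmem : T' ∈ S
    · exact hmem.2.imp (fun γ hγ _ => hγ)
    · exact ⟨fun _ => x₀, fun hc => absurd hc hmem⟩
  choose G hG using hGex
  have hcoh : ∀ t T' : ℝ, t ∈ S → T' ∈ S → t ≤ T' → ∀ r ∈ Icc (0:ℝ) t, G t r = G T' r := by
    intro t T' ht hT' htT'
    have h2 : P t (G T') := by
      have h3 := hG T' hT'
      exact ⟨h3.1.mono (Icc_subset_Icc le_rfl htT'), h3.2.1,
        fun r hr => h3.2.2 r ⟨hr.1, hr.2.trans htT'⟩⟩
    exact huniq t ht.1.1 _ _ (hG t ht) h2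
  set γg : ℝ → E := fun t => G t t with hγg
  have hγglift : ∀ t ∈ S, φ (γg t) = z + t • v := fun t ht => (hG t ht).2.2 t ⟨ht.1.1, le_rfl⟩
  have hγg0 : γg 0 = x₀ := (hG 0 h0S).2.1
  have hγgeq : ∀ T' ∈ S, EqOn γg (G T') (Icc 0 T') := by
    intro T' hT' r hr
    exact hcoh r T' (hdc T' hT' r hr) hT' hr.2 r ⟨hr.1, le_rfl⟩
  have hγgcont : ∀ T' ∈ S, ContinuousOn γg (Icc 0 T') := fun T' hT' =>
    (hG T' hT').1.congr (hγgeq T' hT')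
  have hγglip : ∀ T' ∈ S, LipschitzOnWith C γg (Icc 0 T') := fun T' hT' =>
    aux_lip hd z v (hγgcont T' hT') (fun t ht => hγglift t (hdc T' hT' t ht))
  have hIco : Ico 0 T ⊆ S := by
    intro t ht
    obtain ⟨T', hT', htT'⟩ := exists_lt_of_lt_csSup ⟨0, h0S⟩ ht.2
    exact hdc T' hT' t ⟨ht.1, htT'.le⟩
  have hpair : ∀ a ∈ Ico (0:ℝ) T, ∀ b ∈ Ico (0:ℝ) T,
      dist (γg a) (γg b) ≤ (C : ℝ) * dist a b := by
    intro a ha b hb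
    rcases le_total a b with hab | hab
    · exact (hγglip b (hIco hb)).dist_le_mul a ⟨ha.1, hab⟩ b ⟨hb.1, le_rfl⟩
    · exact (hγglip a (hIco ha)).dist_le_mul a ⟨ha.1, le_rfl⟩ b ⟨hb.1, hab⟩
  -- main step : T ∈ S
  have hTS : T ∈ S := by
    rcases eq_or_lt_of_le hT0 with hT0' | hT0'
    · rwa [← hT0']
    -- 0 < T
    set u : ℕ → ℝ := fun n => T - T / (n + 1) with hu
    have hupos : ∀ n : ℕ, (0:ℝ) < T / (n + 1) := fun n => by positivity
    have humem : ∀ n, u n ∈ Ico (0:ℝ) T := by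
      intro n
      constructor
      · have h5 : T / (n+1) ≤ T := by
          apply div_le_self hT0
          have : (0:ℝ) ≤ (n:ℝ) := Nat.cast_nonneg n
          linarith
        simp only [hu]; linarith
      · simp only [hu]; linarith [hupos n]
    have hulim : Tendsto u atTop (𝓝 T) := by
      have h1 := aux_div T
      simpa using tendsto_const_nhds.sub h1
    have humono : ∀ N n : ℕ, N ≤ n → u N ≤ u n := by
      intro N n hNn
      have h6 : T / (n+1) ≤ T / (N+1) := by
        apply div_le_div_of_nonneg_left hT0 (by positivity)
        have : (N:ℝ) ≤ n := Nat.cast_le.mpr hNn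
        linarith
      simp only [hu]; linarith
    have hcauchy : CauchySeq (fun n => γg (u n)) := by
      refine cauchySeq_of_le_tendsto_0 (fun N => (C : ℝ) * (T / ((N:ℝ) + 1))) ?_ ?_
      · intro n m N hn hm
        calc dist (γg (u n)) (γg (u m)) ≤ (C:ℝ) * dist (u n) (u m) :=
              hpair _ (humem n) _ (humem m)
        _ ≤ (C:ℝ) * (T / (N+1)) := by
            apply mul_le_mul_of_nonneg_left _ (C.coe_nonneg)
            rw [Real.dist_eq, abs_le]
            have h1 := humono N n hn
            have h2 := humono N m hm
            have h3 := (humem n).2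
            have h4 := (humem m).2
            simp only [hu] at h1 h2 h3 h4 ⊢
            constructor <;> linarith
      · simpa using (aux_div T).const_mul (C:ℝ)
    obtain ⟨L, hL⟩ := cauchySeq_tendsto_of_complete hcauchy
    have hdistL : ∀ t ∈ Ico (0:ℝ) T, dist (γg t) L ≤ (C:ℝ) * (T - t) := by
      intro t ht
      have h1 : Tendsto (fun n => dist (γg t) (γg (u n))) atTop (𝓝 (dist (γg t) L)) :=
        tendsto_const_nhds.dist hL
      have h2 : Tendsto (fun n => (C:ℝ) * dist t (u n)) atTop (𝓝 ((C:ℝ) * dist t T)) :=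
        tendsto_const_nhds.mul (tendsto_const_nhds.dist hulim)
      have h3 := le_of_tendsto_of_tendsto' h1 h2 (fun n => hpair t ht _ (humem n))
      rwa [Real.dist_eq, abs_of_nonpos (by linarith [ht.2]), neg_sub] at h3
    set γT : ℝ → E := fun t => if t < T then γg t else L with hγT
    have hγTIco : ∀ t ∈ Ico (0:ℝ) T, γT t = γg t := fun t ht => if_pos ht.2
    have hγTT : γT T = L := if_neg (lt_irrefl T)
    have hγTdist : ∀ t ∈ Icc (0:ℝ) T, dist (γT t) L ≤ (C:ℝ) * (T - t) := by
      intro t ht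
      rcases lt_or_eq_of_le ht.2 with h | h
      · rw [hγTIco t ⟨ht.1, h⟩]; exact hdistL t ⟨ht.1, h⟩
      · rw [h, hγTT]; simp
    refine ⟨⟨hT0, hT1⟩, γT, ?_, ?_, ?_⟩
    · -- continuity
      intro t₀ ht₀
      rcases lt_or_eq_of_le ht₀.2 with ht₀' | ht₀'
      · obtain ⟨T', hT', htT'⟩ := exists_lt_of_lt_csSup ⟨0, h0S⟩ ht₀'
        have hcwa : ContinuousWithinAt γg (Icc 0 T') t₀ :=
          (hγgcont T' hT') t₀ ⟨ht₀.1, htT'.le⟩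
        have hmem : Icc (0:ℝ) T' ∈ 𝓝[Icc 0 T] t₀ := by
          apply mem_nhdsWithin.mpr
          exact ⟨Iio T', isOpen_Iio, htT', fun r hr => ⟨hr.2.1, hr.1.le⟩⟩
        have hcwa2 : ContinuousWithinAt γg (Icc 0 T) t₀ := hcwa.mono_of_mem_nhdsWithin hmem
        apply hcwa2.congr_of_eventuallyEq
        · filter_upwards [eventually_nhdsWithin_of_eventually_nhds
            (isOpen_Iio.eventually_mem (ht₀' : t₀ ∈ Iio T))] with r hr
          exact if_pos hr
        · exact hγTIco t₀ ⟨ht₀.1, ht₀'⟩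
      · -- t₀ = T
        subst ht₀'
        rw [ContinuousWithinAt, hγTT]
        rw [tendsto_iff_dist_tendsto_zero]
        apply squeeze_zero' (Eventually.of_forall (fun t => dist_nonneg))
        · filter_upwards [eventually_mem_nhdsWithin] with t ht
          exact hγTdist t ht
        · have hcont : Tendsto (fun t : ℝ => (C:ℝ) * (T - t)) (𝓝 T) (𝓝 ((C:ℝ) * (T - T))) :=
            ((continuous_const.mul (continuous_const.sub continuous_id)).tendsto T)
          have := hcont.mono_left (nhdsWithin_le_nhds (s := Icc (0:ℝ) T))
          simpa using this
    · rw [hγTIco 0 ⟨le_rfl, hT0'⟩]; exact hγg0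
    · intro t ht
      rcases lt_or_eq_of_le ht.2 with h | h
      · rw [hγTIco t ⟨ht.1, h⟩]; exact hγglift t (hIco ⟨ht.1, h⟩)
      · have h1 : Tendsto (fun n => φ (γg (u n))) atTop (𝓝 (φ L)) := (hφc.tendsto L).comp hL
        have h2 : Tendsto (fun n => z + (u n) • v) atTop (𝓝 (z + T • v)) :=
          tendsto_const_nhds.add (hulim.smul tendsto_const_nhds)
        have h3 : (fun n => φ (γg (u n))) = fun n => z + (u n) • v := by
          funext n; exact hγglift _ (hIco (humem n))
        rw [h3] at h1
        rw [h, hγTT]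
        exact tendsto_nhds_unique h1 h2
  -- T must equal 1
  rcases eq_or_lt_of_le hT1 with hTeq | hTlt
  · obtain ⟨-, γ, hγ⟩ := hTS
    rw [hTeq] at hγ
    exact ⟨γ, hγ⟩
  · exfalso
    obtain ⟨-, γ₁, hγ₁⟩ := hTS
    set w := γ₁ T with hw
    have hφw : φ w = z + T • v := hγ₁.2.2 T ⟨hT0, le_rfl⟩
    obtain ⟨Φ, hws, hφΦ⟩ := hloc w
    have htar : z + T • v ∈ Φ.target := by
      rw [← hφw, hφΦ]; exact Φ.map_source hws
    have hlinec : Continuous (fun t : ℝ => z + t • v) :=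
      continuous_const.add (continuous_id.smul continuous_const)
    obtain ⟨ε, hε, hball⟩ : ∃ ε > 0, ∀ t : ℝ, |t - T| < ε → z + t • v ∈ Φ.target := by
      have := hlinec.continuousAt (x := T) |>.preimage_mem_nhds (Φ.open_target.mem_nhds htar)
      rw [Metric.mem_nhds_iff] at this
      obtain ⟨ε, hε, hsub⟩ := this
      exact ⟨ε, hε, fun t ht => hsub (by rwa [mem_ball, Real.dist_eq])⟩
    set T₂ := min (T + ε/2) 1 with hT₂
    have hTT₂ : T < T₂ := lt_min (by linarith) hTlt
    have hT₂1 : T₂ ≤ 1 := min_le_right _ _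
    have hT₂T : T₂ - T ≤ ε/2 := by
      have : T₂ ≤ T + ε/2 := min_le_left _ _
      linarith
    have hmemtar : ∀ t ∈ Icc T T₂, z + t • v ∈ Φ.target := by
      intro t ht
      apply hball
      rw [abs_lt]
      constructor
      · linarith [ht.1]
      · linarith [ht.2]
    have hT₂0 : 0 ≤ T₂ := le_trans hT0 hTT₂.le
    set γ₂ : ℝ → E := fun t => if t ≤ T then γ₁ (min t T) else Φ.symm (z + (max t T) • v)
      with hγ₂d
    have hγ₂S : T₂ ∈ S := by
      refine ⟨⟨hT₂0, hT₂1⟩, γ₂, ?_, ?_, ?_⟩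
      · apply ContinuousOn.if
        · intro a ha
          have haT : a = T := by
            have h7 := ha.2
            rw [(by ext r; simp : {r : ℝ | r ≤ T} = Iic T), frontier_Iic] at h7
            simpa using h7
          subst haT
          simp only [min_self, max_self, if_pos le_rfl]
          rw [← hφw, hφΦ, Φ.left_inv hws]
        · have hcl : closure {r : ℝ | r ≤ T} = Iic T := by
            rw [(by ext r; simp : {r : ℝ | r ≤ T} = Iic T)]
            exact isClosed_Iic.closure_eq
          rw [hcl]
          apply hγ₁.1.comp ((continuous_id.min continuous_const).continuousOn)
          intro t ht
          exact ⟨le_min ht.1.1 hT0, min_le_right _ _⟩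
        · have hcl : closure {r : ℝ | ¬ r ≤ T} = Ici T := by
            rw [(by ext r; simp : {r : ℝ | ¬ r ≤ T} = Ioi T)]
            exact closure_Ioi T
          rw [hcl]
          apply (Φ.continuousOn_symm.comp
            ((continuous_const.add ((continuous_id.max continuous_const).smul
              continuous_const)).continuousOn))
          intro t ht
          exact hmemtar _ ⟨le_max_right _ _, max_le ht.1.2 hTT₂.le⟩
      · simp only [hγ₂d]
        rw [if_pos hT0, min_eq_left hT0]
        exact hγ₁.2.1
      · intro t ht
        by_cases htT : t ≤ T
        · simp only [hγ₂d]
          rw [if_pos htT, min_eq_left htT]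
          exact hγ₁.2.2 t ⟨ht.1, htT⟩
        · simp only [hγ₂d]
          rw [if_neg htT, max_eq_left (not_le.1 htT).le, hφΦ]
          exact Φ.right_inv (hmemtar t ⟨(not_le.1 htT).le, ht.2⟩)
    have := le_csSup hbdd hγ₂S
    rw [← hT] at this
    linarith




lemma aux_inj {K : ℝ}
    (hd : ∀ x : E, ∃ e : E ≃L[ℝ] F, HasStrictFDerivAt φ (e : E →L[ℝ] F) x ∧
      ‖(e.symm : F →L[ℝ] E)‖ ≤ K) :
    Function.Injective φ := by
  have hloc : IsLocalHomeomorph φ :=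
    aux_localHomeo (fun x => ⟨(hd x).choose, (hd x).choose_spec.1⟩)
  have hφc : Continuous φ := continuous_iff_continuousAt.mpr
    (fun x => (hd x).choose_spec.1.continuousAt)
  have hch : ∀ x : E, ∃ Φ : OpenPartialHomeomorph E F, x ∈ Φ.source ∧ φ = Φ := hloc
  choose Ch hsx hphi using hch
  intro a b hab
  set y := φ b with hy
  set c : ℝ → E := fun s => a + s • (b - a) with hc
  have hccont : Continuous c := continuous_const.add (continuous_id.smul continuous_const)
  have hc0 : c 0 = a := by simp [hc]
  have hc1 : c 1 = b := by simp [hc]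
  have hq : Continuous fun s => φ (c s) := hφc.comp hccont
  have hlift : ∀ s : ℝ, ∃ γ : ℝ → E, ContinuousOn γ (Icc 0 1) ∧ γ 0 = c s ∧
      ∀ t ∈ Icc (0:ℝ) 1, φ (γ t) = φ (c s) + t • (y - φ (c s)) :=
    fun s => aux_lift hd (c s) (y - φ (c s))
  choose Γ hΓc hΓ0 hΓl using hlift
  set p : ℝ → ℝ → F := fun s t => φ (c s) + t • (y - φ (c s)) with hp
  have hpcont : ∀ s, Continuous (p s) :=
    fun s => continuous_const.add (continuous_id.smul continuous_const)
  have hp1 : ∀ s, p s 1 = y := by intro s; simp [hp]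
  have hp0 : ∀ s, p s 0 = φ (c s) := by intro s; simp [hp]
  have hpd : ∀ s₀ t s, t ∈ Icc (0:ℝ) 1 → dist (p s t) (p s₀ t) ≤ ‖φ (c s) - φ (c s₀)‖ := by
    intro s₀ t s ht
    have h1 : p s t - p s₀ t = (1 - t) • (φ (c s) - φ (c s₀)) := by
      simp only [hp, smul_sub]
      module
    rw [dist_eq_norm, h1, norm_smul]
    have h2 : ‖(1:ℝ) - t‖ ≤ 1 := by
      rw [Real.norm_eq_abs, abs_le]; constructor <;> [linarith [ht.2]; linarith [ht.1]]
    nlinarith [norm_nonneg (φ (c s) - φ (c s₀))]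
  set e : ℝ → E := fun s => Γ s 1 with he
  -- local constancy of e
  have hlc : ∀ s₀ : ℝ, ∀ᶠ s in 𝓝 s₀, e s = e s₀ := by
    intro s₀
    -- Lebesgue number for chart cover along Γ s₀
    have hcov : ∀ τ : Icc (0:ℝ) 1, ∃ U : Set ℝ, IsOpen U ∧ (τ:ℝ) ∈ U ∧
        ∀ r ∈ U ∩ Icc (0:ℝ) 1, Γ s₀ r ∈ (Ch (Γ s₀ τ)).source := by
      intro τ
      have h1 : Γ s₀ ⁻¹' (Ch (Γ s₀ τ)).source ∈ 𝓝[Icc 0 1] (τ:ℝ) :=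
        (hΓc s₀ τ τ.2).preimage_mem_nhdsWithin
          ((Ch _).open_source.mem_nhds (hsx _))
      rw [mem_nhdsWithin] at h1
      obtain ⟨U, hUo, hUτ, hUsub⟩ := h1
      exact ⟨U, hUo, hUτ, fun r hr => hUsub ⟨hr.1, hr.2⟩⟩
    choose U hUo hUτ hUsub using hcov
    obtain ⟨δ, hδ, hleb⟩ := lebesgue_number_lemma_of_metric isCompact_Icc hUo
      (fun r hr => mem_iUnion.mpr ⟨⟨r, hr⟩, hUτ ⟨r, hr⟩⟩)
    obtain ⟨N, hNδ⟩ := exists_nat_gt (1/δ)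
    have hN0 : 0 < (N:ℝ) := lt_trans (by positivity) hNδ
    have h1N : 1/(N:ℝ) < δ := by
      rw [div_lt_iff₀ hN0]
      rw [div_lt_iff₀ hδ] at hNδ
      linarith [mul_comm δ (N:ℝ) ▸ hNδ]
    set τ : ℕ → ℝ := fun i => (i:ℝ)/N with hτ
    have hτsucc : ∀ i : ℕ, τ (i+1) = τ i + 1/N := by
      intro i; simp only [hτ]; push_cast; ring
    have hτmono : ∀ i : ℕ, τ i ≤ τ (i+1) := by
      intro i
      rw [hτsucc]
      have : 0 ≤ 1/(N:ℝ) := by positivity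
      linarith
    have hθex : ∀ i : ℕ, ∃ ti : Icc (0:ℝ) 1, i ≤ N → ball (τ i) δ ⊆ U ti := by
      intro i
      by_cases hiN : i ≤ N
      · have hmem : τ i ∈ Icc (0:ℝ) 1 := ⟨by positivity, by
          rw [div_le_one hN0]; exact_mod_cast hiN⟩
        obtain ⟨ti, hti⟩ := hleb (τ i) hmem
        exact ⟨ti, fun _ => hti⟩
      · exact ⟨⟨0, by norm_num⟩, fun hcn => absurd hcn hiN⟩
    choose θ hθb using hθex
    set Ψ : ℕ → OpenPartialHomeomorph E F := fun i => Ch (Γ s₀ (θ i)) with hΨ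
    have hphiΨ : ∀ i : ℕ, φ = ⇑(Ψ i) := fun i => hphi _
    have hIccsub : ∀ i : ℕ, i < N → Icc (τ i) (τ (i+1)) ⊆ Icc (0:ℝ) 1 := by
      intro i hiN r hr
      refine ⟨le_trans (by positivity) hr.1, le_trans hr.2 ?_⟩
      rw [hτ]
      rw [div_le_one hN0]
      exact_mod_cast Nat.succ_le_of_lt hiN
    have hKm : ∀ i : ℕ, i < N → ∀ r ∈ Icc (τ i) (τ (i+1)), Γ s₀ r ∈ (Ψ i).source := by
      intro i hiN r hr
      apply hUsub (θ i) r ⟨?_, hIccsub i hiN hr⟩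
      apply hθb i (le_of_lt hiN)
      rw [mem_ball, Real.dist_eq, abs_lt]
      have h2 := hτsucc i
      constructor <;> [linarith [hr.1]; linarith [hr.2]]
    -- p s t stays in targets, eventually in s
    have hA : ∀ i : ℕ, i < N → ∀ᶠ s in 𝓝 s₀, ∀ t ∈ Icc (τ i) (τ (i+1)),
        p s t ∈ (Ψ i).target := by
      intro i hiN
      have hKcpt : IsCompact (p s₀ '' Icc (τ i) (τ (i+1))) :=
        (isCompact_Icc.image (hpcont s₀))
      have hKsub : p s₀ '' Icc (τ i) (τ (i+1)) ⊆ (Ψ i).target := by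
        rintro - ⟨r, hr, rfl⟩
        have h3 : φ (Γ s₀ r) = p s₀ r := hΓl s₀ r (hIccsub i hiN hr)
        rw [← h3, hphiΨ i]
        exact (Ψ i).map_source (hKm i hiN r hr)
      obtain ⟨ε, hε, hthick⟩ := hKcpt.exists_thickening_subset_open (Ψ i).open_target hKsub
      have hev : ∀ᶠ s in 𝓝 s₀, ‖φ (c s) - φ (c s₀)‖ < ε := by
        have h4' : Continuous (fun s => ‖φ (c s) - φ (c s₀)‖) :=
          (hq.sub continuous_const).norm
        have h4 : Tendsto (fun s => ‖φ (c s) - φ (c s₀)‖) (𝓝 s₀) (𝓝 0) := by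
          simpa using h4'.tendsto s₀
        exact h4.eventually_lt_const hε
      filter_upwards [hev] with s hs t ht
      apply hthick
      rw [mem_thickening_iff]
      refine ⟨p s₀ t, mem_image_of_mem _ ht, ?_⟩
      exact lt_of_le_of_lt (hpd s₀ t s (hIccsub i hiN ht)) hs
    -- the inductive claim
    have hR : ∀ i : ℕ, i < N → ∀ᶠ s in 𝓝 s₀, ∀ t ∈ Icc (τ i) (τ (i+1)),
        Γ s t = (Ψ i).symm (p s t) := by
      -- generic step: junction equality implies claim on the segment
      have hstep : ∀ i : ℕ, i < N →
          (∀ᶠ s in 𝓝 s₀, Γ s (τ i) = (Ψ i).symm (p s (τ i))) →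
          ∀ᶠ s in 𝓝 s₀, ∀ t ∈ Icc (τ i) (τ (i+1)), Γ s t = (Ψ i).symm (p s t) := by
        intro i hiN hJ
        filter_upwards [hJ, hA i hiN] with s hs hAs
        intro t ht
        refine aux_uniq hloc isPreconnected_Icc
          ((hΓc s).mono (hIccsub i hiN))
          (((Ψ i).continuousOn_symm.comp (hpcont s).continuousOn)
            (fun r hr => hAs r hr)) ?_
          (left_mem_Icc.mpr (hτmono i)) hs ht
        intro r hr
        have h8 : φ ((Ψ i).symm (p s r)) = p s r := by
          rw [hphiΨ i]
          exact (Ψ i).right_inv (hAs r hr)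
        simp only [Function.comp_apply]
        rw [h8, hΓl s r (hIccsub i hiN hr)]
      -- junction equalities by induction
      have hJall : ∀ i : ℕ, i < N → ∀ᶠ s in 𝓝 s₀, Γ s (τ i) = (Ψ i).symm (p s (τ i)) := by
        intro i
        induction i with
        | zero =>
          intro h0N
          have hτ0 : τ 0 = 0 := by simp [hτ]
          have hc0src : c s₀ ∈ (Ψ 0).source := by
            have := hKm 0 h0N (τ 0) (left_mem_Icc.mpr (hτmono 0))
            rwa [hτ0, hΓ0 s₀] at this
          have hev : ∀ᶠ s in 𝓝 s₀, c s ∈ (Ψ 0).source :=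
            hccont.continuousAt.eventually_mem ((Ψ 0).open_source.mem_nhds hc0src)
          filter_upwards [hev] with s hs
          rw [hτ0, hΓ0 s, hp0 s, hphiΨ 0]
          exact ((Ψ 0).left_inv hs).symm
        | succ j ihj =>
          intro hjN
          have hjN' : j < N := Nat.lt_of_succ_lt hjN
          have hRj := hstep j hjN' (ihj hjN')
          -- u s := (Ψ j).symm (p s (τ (j+1))) equals Γ s (τ (j+1)) eventually
          have hption : τ (j+1) ∈ Icc (τ j) (τ (j+1)) := right_mem_Icc.mpr (hτmono j)
          have hption' : τ (j+1) ∈ Icc (τ (j+1)) (τ (j+2)) := left_mem_Icc.mpr (hτmono (j+1))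
          -- continuity of s ↦ (Ψ j).symm (p s (τ (j+1))) at s₀
          have hps₀ : p s₀ (τ (j+1)) ∈ (Ψ j).target := (hA j hjN').self_of_nhds _ hption
          have hin : ContinuousAt (fun s => p s (τ (j+1))) s₀ :=
            (hq.add (continuous_const.smul (continuous_const.sub hq))).continuousAt
          have hout : ContinuousAt (Ψ j).symm (p s₀ (τ (j+1))) :=
            (Ψ j).symm.continuousAt (by rwa [(Ψ j).symm_source])
          have hucont : ContinuousAt (fun s => (Ψ j).symm (p s (τ (j+1)))) s₀ :=
            ContinuousAt.comp (x := s₀) hout hin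
          have hu0 : (Ψ j).symm (p s₀ (τ (j+1))) = Γ s₀ (τ (j+1)) := by
            have h5 : φ (Γ s₀ (τ (j+1))) = p s₀ (τ (j+1)) := hΓl s₀ _ (hIccsub j hjN' hption)
            rw [← h5, hphiΨ j]
            exact (Ψ j).left_inv (hKm j hjN' _ hption)
          have hΓsrc : Γ s₀ (τ (j+1)) ∈ (Ψ (j+1)).source := hKm (j+1) hjN _ hption'
          have huev : ∀ᶠ s in 𝓝 s₀, (Ψ j).symm (p s (τ (j+1))) ∈ (Ψ (j+1)).source := by
            have := hucont.eventually_mem ((Ψ (j+1)).open_source.mem_nhds (hu0 ▸ hΓsrc))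
            exact this
          filter_upwards [hRj, huev, hA j hjN', hA (j+1) hjN] with s hRjs hus hAj hAj1
          have h6 : Γ s (τ (j+1)) = (Ψ j).symm (p s (τ (j+1))) := hRjs _ hption
          rw [h6]
          -- both sides in source of Ψ (j+1) and φ-values equal
          have h7 : p s (τ (j+1)) ∈ (Ψ (j+1)).target := hAj1 _ hption'
          have hL : φ ((Ψ j).symm (p s (τ (j+1)))) = p s (τ (j+1)) := by
            rw [hphiΨ j]
            exact (Ψ j).right_inv (hAj _ hption)
          have hRR : φ ((Ψ (j+1)).symm (p s (τ (j+1)))) = p s (τ (j+1)) := by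
            rw [hphiΨ (j+1)]
            exact (Ψ (j+1)).right_inv h7
          apply (Ψ (j+1)).injOn hus ((Ψ (j+1)).map_target h7)
          rw [← hphiΨ (j+1), hL, hRR]
      intro i hiN
      exact hstep i hiN (hJall i hiN)
    -- conclude : e is (Ψ (N-1)).symm y near s₀
    have hN0' : 0 < N := by exact_mod_cast hN0
    have hiN : N - 1 < N := Nat.sub_lt hN0' one_pos
    have hτtop : τ (N - 1 + 1) = 1 := by
      have h11 : N - 1 + 1 = N := Nat.succ_pred_eq_of_pos hN0'
      rw [h11]
      show (N:ℝ)/N = 1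
      exact div_self (ne_of_gt hN0)
    have h10 : (1:ℝ) ∈ Icc (τ (N-1)) (τ (N-1+1)) := by
      refine ⟨?_, le_of_eq hτtop.symm⟩
      rw [← hτtop]
      exact hτmono _
    filter_upwards [hR (N-1) hiN] with s hfs
    have h11 : Γ s 1 = (Ψ (N-1)).symm y := by
      rw [← hp1 s]
      exact hfs 1 h10
    have h12 : Γ s₀ 1 = (Ψ (N-1)).symm y := by
      rw [← hp1 s₀]
      exact (hR (N-1) hiN).self_of_nhds 1 h10
    show Γ s 1 = Γ s₀ 1
    rw [h11, h12]
  -- e is locally constant hence constant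
  have hopen : ∀ w : E, IsOpen {s : ℝ | e s = w} := by
    intro w
    rw [isOpen_iff_eventually]
    intro s hs
    filter_upwards [hlc s] with r hr
    rw [hr]; exact hs
  have hconst : e 0 = e 1 := by
    have hlocc : IsLocallyConstant e := by
      intro s
      have : e ⁻¹' s = ⋃ w ∈ s, {r : ℝ | e r = w} := by
        ext r; simp [eq_comm]
      rw [this]
      exact isOpen_biUnion (fun w _ => hopen w)
    exact hlocc.apply_eq_of_isPreconnected isPreconnected_univ (mem_univ 0) (mem_univ 1)
  -- e 0 = a, e 1 = b
  have he0 : e 0 = a := by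
    have hconstlift : ∀ t ∈ Icc (0:ℝ) 1, φ ((fun _ => a) t) = φ (c 0) + t • (y - φ (c 0)) := by
      intro t ht
      show φ a = φ (c 0) + t • (y - φ (c 0))
      rw [hc0, hab]
      simp [hy]
    have := aux_uniq hloc isPreconnected_Icc (hΓc 0) continuousOn_const
      (fun t ht => by
        simp only [Function.comp_apply]
        rw [hΓl 0 t ht, hconstlift t ht])
      (left_mem_Icc.mpr zero_le_one) (by rw [hΓ0 0, hc0])
      (right_mem_Icc.mpr zero_le_one)
    exact this
  have he1 : e 1 = b := by
    have hconstlift : ∀ t ∈ Icc (0:ℝ) 1, φ ((fun _ => b) t) = φ (c 1) + t • (y - φ (c 1)) := by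
      intro t ht
      show φ b = φ (c 1) + t • (y - φ (c 1))
      rw [hc1]
      simp [hy]
    have := aux_uniq hloc isPreconnected_Icc (hΓc 1) continuousOn_const
      (fun t ht => by
        simp only [Function.comp_apply]
        rw [hΓl 1 t ht, hconstlift t ht])
      (left_mem_Icc.mpr zero_le_one) (by rw [hΓ0 1, hc1])
      (right_mem_Icc.mpr zero_le_one)
    exact this
  rw [← he0, ← he1, hconst]

end HadamardAux

/-- Let `E`, `F` be Banach spaces and `φ ∈ FC¹(E,F)` such that `Dφ(x)` is
invertible (as a continuous linear map) for every `x` and `‖Dφ(x)⁻¹‖_op ≤ K` uniformly.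
Then `φ` is a surjective homeomorphism from `E` onto `F`. -/
theorem stmt10 {E F : Type*} [NormedAddCommGroup E] [NormedSpace ℝ E] [CompleteSpace E]
    [NormedAddCommGroup F] [NormedSpace ℝ F] [CompleteSpace F]
    (φ : E → F) (hφ : ContDiff ℝ 1 φ) (K : ℝ)
    (h : ∀ x : E, ∃ e : E ≃L[ℝ] F, (e : E →L[ℝ] F) = fderiv ℝ φ x ∧
      ‖(e.symm : F →L[ℝ] E)‖ ≤ K) :
    Function.Surjective φ ∧ ∃ h : E ≃ₜ F, ⇑h = φ := by
  have hd : ∀ x : E, ∃ e : E ≃L[ℝ] F, HasStrictFDerivAt φ (e : E →L[ℝ] F) x ∧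
      ‖(e.symm : F →L[ℝ] E)‖ ≤ K := by
    intro x
    obtain ⟨e, he, hKe⟩ := h x
    refine ⟨e, ?_, hKe⟩
    have h1 := (hφ.contDiffAt (x := x)).hasStrictFDerivAt one_ne_zero
    rwa [← he] at h1
  have hsurj : Function.Surjective φ := by
    intro y
    obtain ⟨γ, hγc, hγ0, hγl⟩ := aux_lift hd 0 (y - φ 0)
    refine ⟨γ 1, ?_⟩
    have h1 := hγl 1 ⟨zero_le_one, le_rfl⟩
    rw [h1, one_smul]
    abel
  have hinj := aux_inj hd
  refine ⟨hsurj, Equiv.toHomeomorphOfContinuousOpen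
    (Equiv.ofBijective φ ⟨hinj, hsurj⟩) hφ.continuous
    (aux_localHomeo (fun x => ⟨(hd x).choose, (hd x).choose_spec.1⟩)).isOpenMap, rfl⟩
end

section
/- Let X be a Banach space, W a set of weights on X containing 1_X, φ ∈ C^∞_W(X,X) with φ + id_X a diffeomorphism, ψ := (φ + id_X)^{-1} − id_X, and x ∈ X with ‖Dφ(x)‖_op < 1. Then Dψ((φ + id_X)(x)) = Dφ(x)·QI_{L(X,X)}(−Dφ(x)) − Dφ(x), where QI denotes the quasi-inversion in the Banach algebra L(X,X). -/
open Filter Topology Set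
open scoped ENNReal NNReal

noncomputable section

variable {X : Type*} [NormedAddCommGroup X] [NormedSpace ℝ X]

/-- Let `X` be a Banach space, `W` a set of weights on `X` containing `1_X`,
`φ ∈ C^∞_W(X,X)` with `φ + id_X` a diffeomorphism (with smooth inverse `g`),
`ψ := (φ + id_X)⁻¹ − id_X` and `x` with `‖Dφ(x)‖_op < 1`.  Then
`Dψ((φ + id_X)(x)) = Dφ(x)·QI(−Dφ(x)) − Dφ(x)`, where `QI(T) = −Σ_{k≥1} T^k` is
quasi-inversion in the Banach algebra `L(X,X)`. -/
theorem stmt13 [CompleteSpace X]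
    (W : Set (X → EReal)) (h1 : (fun _ : X => (1 : EReal)) ∈ W)
    (φ g : X → X) (hφ : MemCW Set.univ W (⊤ : ℕ∞) φ)
    (hg : ContDiff ℝ (⊤ : ℕ∞) g)
    (hgl : Function.LeftInverse g (fun x => φ x + x))
    (hgr : Function.RightInverse g (fun x => φ x + x))
    (x : X) (hx : ‖fderiv ℝ φ x‖ < 1) :
    fderiv ℝ (fun y => g y - y) (φ x + x) =
      fderiv ℝ φ x * (-(∑' n : ℕ, (-(fderiv ℝ φ x)) ^ (n + 1))) - fderiv ℝ φ x := by
  classical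
  set A := fderiv ℝ φ x with hA
  have hφC : ContDiff ℝ (⊤ : ℕ∞) φ := contDiffOn_univ.mp hφ.1
  have hF : HasFDerivAt (fun y => φ y + y) (A + 1) x := by
    exact
      ((hφC.differentiable (by simp) x).hasFDerivAt.add (hasFDerivAt_id x))
  set B := fderiv ℝ g (φ x + x) with hB
  have hgB : HasFDerivAt g B (φ x + x) :=
    (hg.differentiable (by simp) (φ x + x)).hasFDerivAt
  -- B * (A + 1) = 1  (from g ∘ F = id)
  have hBA : B * (A + 1) = 1 := by
    have h1 := HasFDerivAt.comp (f := fun y => φ y + y) (g := g) x hgB hF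
    have h2 : HasFDerivAt (g ∘ fun y => φ y + y) (ContinuousLinearMap.id ℝ X) x := by
      rw [hgl.comp_eq_id]; exact hasFDerivAt_id x
    have := h1.unique h2
    simpa [ContinuousLinearMap.mul_def, ContinuousLinearMap.one_def] using this
  -- (A + 1) * B = 1  (from F ∘ g = id at φ x + x)
  have hAB : (A + 1) * B = 1 := by
    have hgFx : g (φ x + x) = x := hgl x
    have hF' : HasFDerivAt (fun y => φ y + y) (A + 1) (g (φ x + x)) := by
      rw [hgFx]; exact hF
    have h1 := hF'.comp (φ x + x) hgB
    have h2 : HasFDerivAt ((fun y => φ y + y) ∘ g) (ContinuousLinearMap.id ℝ X)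
        (φ x + x) := by
      rw [hgr.comp_eq_id]; exact hasFDerivAt_id (φ x + x)
    have := h1.unique h2
    simpa [ContinuousLinearMap.mul_def, ContinuousLinearMap.one_def] using this
  -- the geometric series
  have hnA : ‖-A‖ < 1 := by simpa using hx
  set S : X →L[ℝ] X := ∑' n : ℕ, (-A) ^ n with hS
  have hsum : Summable (fun n : ℕ => (-A) ^ n) := summable_geometric_of_norm_lt_one hnA
  have hSA : S * (1 + A) = 1 := by
    have := geom_series_mul_neg (-A) hnA
    simpa [sub_neg_eq_add] using this
  have hAS : (1 + A) * S = 1 := by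
    have := mul_neg_geom_series (-A) hnA
    simpa [sub_neg_eq_add] using this
  -- B = S
  have hBS : B = S := by
    calc B = 1 * B := (one_mul B).symm
      _ = (S * (1 + A)) * B := by rw [hSA]
      _ = S * ((A + 1) * B) := by rw [mul_assoc, add_comm (1 : X →L[ℝ] X) A]
      _ = S := by rw [hAB, mul_one]
  -- derivative of ψ = g - id at φ x + x
  have hψ : HasFDerivAt (fun y => g y - y) (B - 1) (φ x + x) := by
    exact hgB.sub (hasFDerivAt_id (φ x + x))
  rw [hψ.fderiv]
  -- rewrite the tail series
  have htail : (∑' n : ℕ, (-A) ^ (n + 1)) = S * (-A) := by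
    rw [hS, ← hsum.tsum_mul_right]
    simp [pow_succ]
  rw [htail, hBS]
  -- algebra: S - 1 = A * (-(S * -A)) - A
  have h1 : A * S = 1 - S := by
    have := hAS
    rw [add_mul, one_mul] at this
    exact eq_sub_of_add_eq' this
  calc S - 1 = (A * S) * A - A + (S - 1 - ((A * S) * A - A)) := by abel
    _ = (A * S) * A - A := by
        rw [h1, sub_mul, one_mul]
        have h2 : S * A = 1 - S := by
          have := hSA
          rw [mul_add, mul_one] at this
          exact eq_sub_of_add_eq' this
        rw [h2]; abel
    _ = A * (-(S * -A)) - A := by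
        simp [mul_neg, neg_neg, mul_assoc]
end
end

section
/- There exists a bounded smooth function γ : ℝ → ℝ with all derivatives bounded, such that γ + id_ℝ is a diffeomorphism of ℝ, but the derivative of (γ + id_ℝ)^{-1} − id_ℝ is unbounded. Concretely, if φ is the antiderivative with φ(0)=0 of x ↦ (2/π)·arctan(x) and γ := sin∘φ, then γ has these properties. -/
namespace Stmt15Aux

/-- The derivative function `x ↦ (2/π)·arctan x`. -/
noncomputable def B : ℝ → ℝ := fun x => 2 / Real.pi * Real.arctan x

lemma B_cont : Continuous B := continuous_const.mul Real.continuous_arctan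

lemma B_contDiff : ContDiff ℝ (⊤ : ℕ∞) B := contDiff_const.mul Real.contDiff_arctan

lemma abs_B_lt_one (x : ℝ) : |B x| < 1 := by
  have h1 : |Real.arctan x| < Real.pi / 2 :=
    abs_lt.2 ⟨Real.neg_pi_div_two_lt_arctan x, Real.arctan_lt_pi_div_two x⟩
  have h2 : (0:ℝ) < 2 / Real.pi := by positivity
  calc |B x| = 2 / Real.pi * |Real.arctan x| := by
        simp only [B, abs_mul, abs_of_pos h2]
    _ < 2 / Real.pi * (Real.pi / 2) := mul_lt_mul_of_pos_left h1 h2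
    _ = 1 := by field_simp

/-- algebra of functions generated by `sin∘φ, cos∘φ, B, (1+x²)⁻¹, x(1+x²)⁻¹`. -/
inductive Mem (φ : ℝ → ℝ) : (ℝ → ℝ) → Prop
  | sinφ : Mem φ (fun x => Real.sin (φ x))
  | cosφ : Mem φ (fun x => Real.cos (φ x))
  | bmem : Mem φ B
  | rmem : Mem φ (fun x => (1 + x ^ 2)⁻¹)
  | smem : Mem φ (fun x => x * (1 + x ^ 2)⁻¹)
  | const (c : ℝ) : Mem φ (fun _ => c)
  | add {f g} : Mem φ f → Mem φ g → Mem φ (fun x => f x + g x)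
  | mul {f g} : Mem φ f → Mem φ g → Mem φ (fun x => f x * g x)

variable (φ : ℝ → ℝ) (hφ' : ∀ x, HasDerivAt φ (B x) x)

include hφ'

lemma phi_contDiff : ContDiff ℝ (⊤ : ℕ∞) φ := by
  rw [contDiff_infty_iff_deriv]
  refine ⟨fun x => (hφ' x).differentiableAt, ?_⟩
  have hd : deriv φ = B := funext fun x => (hφ' x).deriv
  rw [hd]
  exact B_contDiff

omit hφ' in
lemma one_plus_sq_pos (x : ℝ) : (0:ℝ) < 1 + x ^ 2 := by positivity

lemma mem_closed {f : ℝ → ℝ} (hf : Mem φ f) :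
    ContDiff ℝ (⊤ : ℕ∞) f ∧ (∃ C, ∀ x, |f x| ≤ C) ∧ Mem φ (deriv f) := by
  induction hf with
  | sinφ =>
    refine ⟨Real.contDiff_sin.comp (phi_contDiff φ hφ'), ⟨1, fun x =>
      abs_le.2 ⟨Real.neg_one_le_sin _, Real.sin_le_one _⟩⟩, ?_⟩
    have hd : deriv (fun x => Real.sin (φ x)) = fun x => Real.cos (φ x) * B x :=
      funext fun x => ((Real.hasDerivAt_sin (φ x)).comp x (hφ' x)).deriv
    rw [hd]; exact Mem.mul Mem.cosφ Mem.bmem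
  | cosφ =>
    refine ⟨Real.contDiff_cos.comp (phi_contDiff φ hφ'), ⟨1, fun x =>
      abs_le.2 ⟨Real.neg_one_le_cos _, Real.cos_le_one _⟩⟩, ?_⟩
    have hd : deriv (fun x => Real.cos (φ x)) = fun x => (-1) * Real.sin (φ x) * B x :=
      funext fun x => (((Real.hasDerivAt_cos (φ x)).comp x (hφ' x)).deriv).trans (by ring)
    rw [hd]; exact Mem.mul (Mem.mul (Mem.const (-1)) Mem.sinφ) Mem.bmem
  | bmem =>
    refine ⟨B_contDiff, ⟨1, fun x => (abs_B_lt_one x).le⟩, ?_⟩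
    have hd : deriv B = fun x => (2 / Real.pi) * (1 + x ^ 2)⁻¹ :=
      funext fun x => ((Real.hasDerivAt_arctan' x).const_mul (2 / Real.pi)).deriv
    rw [hd]; exact Mem.mul (Mem.const _) Mem.rmem
  | rmem =>
    have hne : ∀ x : ℝ, (1 : ℝ) + x ^ 2 ≠ 0 := fun x => (one_plus_sq_pos x).ne'
    have hder : ∀ x : ℝ, HasDerivAt (fun x : ℝ => (1 + x ^ 2)⁻¹)
        ((-2) * (x * (1 + x ^ 2)⁻¹) * (1 + x ^ 2)⁻¹) x := by
      intro x
      have h1 : HasDerivAt (fun x : ℝ => 1 + x ^ 2) (2 * x) x := by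
        simpa using (hasDerivAt_pow 2 x).const_add 1
      have h2 := h1.inv (hne x)
      refine h2.congr_deriv ?_
      have key : (((1:ℝ) + x ^ 2) ^ 2)⁻¹ = (1 + x ^ 2)⁻¹ * (1 + x ^ 2)⁻¹ := by
        rw [← mul_inv, ← pow_two]
      rw [eq_comm, div_eq_mul_inv, key]
      ring
    refine ⟨(contDiff_const.add (contDiff_id.pow 2)).inv hne, ⟨1, fun x => ?_⟩, ?_⟩
    · rw [abs_of_pos (inv_pos.2 (one_plus_sq_pos x))]
      rw [inv_le_one_iff₀]
      right; nlinarith [sq_nonneg x]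
    · have hd : deriv (fun x : ℝ => (1 + x ^ 2)⁻¹)
          = fun x => (-2) * (x * (1 + x ^ 2)⁻¹) * (1 + x ^ 2)⁻¹ :=
        funext fun x => (hder x).deriv
      rw [hd]; exact Mem.mul (Mem.mul (Mem.const (-2)) Mem.smem) Mem.rmem
  | smem =>
    have hne : ∀ x : ℝ, (1 : ℝ) + x ^ 2 ≠ 0 := fun x => (one_plus_sq_pos x).ne'
    have hder : ∀ x : ℝ, HasDerivAt (fun x : ℝ => x * (1 + x ^ 2)⁻¹)
        ((1 + x ^ 2)⁻¹ + (-2) * (x * (1 + x ^ 2)⁻¹) * (x * (1 + x ^ 2)⁻¹)) x := by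
      intro x
      have h1 : HasDerivAt (fun x : ℝ => 1 + x ^ 2) (2 * x) x := by
        simpa using (hasDerivAt_pow 2 x).const_add 1
      have h2 := (hasDerivAt_id x).mul (h1.inv (hne x))
      refine h2.congr_deriv ?_
      have hpos := one_plus_sq_pos x
      simp only [Pi.inv_apply, id]
      field_simp
    refine ⟨contDiff_id.mul ((contDiff_const.add (contDiff_id.pow 2)).inv hne),
      ⟨1, fun x => ?_⟩, ?_⟩
    · have hpos := one_plus_sq_pos x
      have h2 : |x| ≤ 1 + x ^ 2 := by nlinarith [sq_abs x, abs_nonneg x]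
      have h3 : |x| * (1 + x ^ 2)⁻¹ ≤ (1 + x ^ 2) * (1 + x ^ 2)⁻¹ :=
        mul_le_mul_of_nonneg_right h2 (inv_nonneg.2 hpos.le)
      rw [mul_inv_cancel₀ hpos.ne'] at h3
      calc |x * (1 + x ^ 2)⁻¹| = |x| * (1 + x ^ 2)⁻¹ := by
            rw [abs_mul, abs_of_pos (inv_pos.2 hpos)]
        _ ≤ 1 := h3
    · have hd : deriv (fun x : ℝ => x * (1 + x ^ 2)⁻¹)
          = fun x => (1 + x ^ 2)⁻¹ + (-2) * (x * (1 + x ^ 2)⁻¹) * (x * (1 + x ^ 2)⁻¹) :=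
        funext fun x => (hder x).deriv
      rw [hd]
      exact Mem.add Mem.rmem (Mem.mul (Mem.mul (Mem.const (-2)) Mem.smem) Mem.smem)
  | const c =>
    refine ⟨contDiff_const, ⟨|c|, fun x => le_refl _⟩, ?_⟩
    have hd : deriv (fun _ : ℝ => c) = fun _ : ℝ => (0:ℝ) :=
      funext fun x => deriv_const x c
    rw [hd]; exact Mem.const 0
  | @add f g hf hg ihf ihg =>
    obtain ⟨hf1, ⟨Cf, hCf⟩, hf3⟩ := ihf
    obtain ⟨hg1, ⟨Cg, hCg⟩, hg3⟩ := ihg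
    refine ⟨hf1.add hg1, ⟨Cf + Cg, fun x =>
      (abs_add_le _ _).trans (add_le_add (hCf x) (hCg x))⟩, ?_⟩
    have hd : deriv (fun x => f x + g x) = fun x => deriv f x + deriv g x :=
      funext fun x => deriv_fun_add ((hf1.differentiable (by simp)).differentiableAt)
        ((hg1.differentiable (by simp)).differentiableAt)
    rw [hd]; exact Mem.add hf3 hg3
  | @mul f g hf hg ihf ihg =>
    obtain ⟨hf1, ⟨Cf, hCf⟩, hf3⟩ := ihf
    obtain ⟨hg1, ⟨Cg, hCg⟩, hg3⟩ := ihg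
    have hCf0 : 0 ≤ Cf := (abs_nonneg _).trans (hCf 0)
    refine ⟨hf1.mul hg1, ⟨Cf * Cg, fun x => ?_⟩, ?_⟩
    · rw [abs_mul]
      exact mul_le_mul (hCf x) (hCg x) (abs_nonneg _) hCf0
    · have hd : deriv (fun x => f x * g x) = fun x => deriv f x * g x + f x * deriv g x :=
        funext fun x => deriv_fun_mul ((hf1.differentiable (by simp)).differentiableAt)
          ((hg1.differentiable (by simp)).differentiableAt)
      rw [hd]; exact Mem.add (Mem.mul hf3 hg) (Mem.mul hf hg3)

lemma mem_iteratedDeriv : ∀ (n : ℕ) {f : ℝ → ℝ}, Mem φ f → Mem φ (iteratedDeriv n f) := by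
  intro n
  induction n with
  | zero => intro f hf; simpa [iteratedDeriv_zero] using hf
  | succ n ih =>
    intro f hf
    rw [iteratedDeriv_succ']
    exact ih (mem_closed φ hφ' hf).2.2

end Stmt15Aux

/-- There is a smooth function `γ : ℝ → ℝ`, bounded together with all its
derivatives, such that `γ + id_ℝ` is a diffeomorphism of `ℝ` whereas the derivative of
`(γ + id_ℝ)⁻¹ − id_ℝ` is unbounded; concretely `γ = sin ∘ φ`, where `φ` is the antiderivative
of `x ↦ (2/π)·arctan x` vanishing at `0`. -/
theorem stmt15 (φ γ : ℝ → ℝ)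
    (hφ : φ = fun x : ℝ => ∫ t in (0 : ℝ)..x, (2 / Real.pi) * Real.arctan t)
    (hγ : γ = Real.sin ∘ φ) :
    ContDiff ℝ (⊤ : ℕ∞) γ ∧
    (∀ n : ℕ, ∃ C : ℝ, ∀ x, |iteratedDeriv n γ x| ≤ C) ∧
    ∃ g : ℝ → ℝ, ContDiff ℝ (⊤ : ℕ∞) g ∧
      Function.LeftInverse g (fun x => γ x + x) ∧
      Function.RightInverse g (fun x => γ x + x) ∧
      ¬ ∃ C : ℝ, ∀ x, |deriv (fun y => g y - y) x| ≤ C := by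
  have hφ' : ∀ x, HasStrictDerivAt φ (Stmt15Aux.B x) x := by
    intro x
    rw [hφ]
    exact Stmt15Aux.B_cont.integral_hasStrictDerivAt 0 x
  have hφd : ∀ x, HasDerivAt φ (Stmt15Aux.B x) x := fun x => (hφ' x).hasDerivAt
  have hφs : ContDiff ℝ (⊤ : ℕ∞) φ := Stmt15Aux.phi_contDiff φ hφd
  have hγs : ContDiff ℝ (⊤ : ℕ∞) γ := by rw [hγ]; exact Real.contDiff_sin.comp hφs
  refine ⟨hγs, ?_, ?_⟩
  · intro n
    have hm : Stmt15Aux.Mem φ γ := by rw [hγ]; exact Stmt15Aux.Mem.sinφ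
    obtain ⟨-, ⟨C, hC⟩, -⟩ :=
      Stmt15Aux.mem_closed φ hφd (Stmt15Aux.mem_iteratedDeriv φ hφd n hm)
    exact ⟨C, hC⟩
  · set F : ℝ → ℝ := fun x => γ x + x with hFdef
    set F' : ℝ → ℝ := fun x => Real.cos (φ x) * Stmt15Aux.B x + 1 with hF'def
    have hFd : ∀ x, HasDerivAt F (F' x) x := by
      intro x
      have h1 : HasDerivAt γ (Real.cos (φ x) * Stmt15Aux.B x) x := by
        rw [hγ]; exact (Real.hasDerivAt_sin (φ x)).comp x (hφd x)
      exact h1.add (hasDerivAt_id x)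
    have hF'pos : ∀ x, 0 < F' x := by
      intro x
      have h1 : |Real.cos (φ x) * Stmt15Aux.B x| < 1 := by
        rw [abs_mul]
        calc |Real.cos (φ x)| * |Stmt15Aux.B x| ≤ 1 * |Stmt15Aux.B x| := by
              gcongr
              exact Real.abs_cos_le_one _
          _ < 1 := by rw [one_mul]; exact Stmt15Aux.abs_B_lt_one x
      have h2 := (abs_lt.1 h1).1
      simp only [hF'def]
      linarith
    have hFs : ContDiff ℝ (⊤ : ℕ∞) F := hγs.add contDiff_id
    have hmono : StrictMono F :=
      strictMono_of_deriv_pos fun x => by rw [(hFd x).deriv]; exact hF'pos x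
    have hγbd : ∀ x, |γ x| ≤ 1 := by
      rw [hγ]
      exact fun x => abs_le.2 ⟨Real.neg_one_le_sin _, Real.sin_le_one _⟩
    have hFcont : Continuous F := hγs.continuous.add continuous_id
    have htop : Filter.Tendsto F Filter.atTop Filter.atTop := by
      refine Filter.tendsto_atTop_mono (fun x => ?_)
        (Filter.tendsto_atTop_add_const_right _ (-1) Filter.tendsto_id)
      have := (abs_le.1 (hγbd x)).1
      simp only [hFdef, id]
      linarith
    have hbot : Filter.Tendsto F Filter.atBot Filter.atBot := by
      refine Filter.tendsto_atBot_mono (fun x => ?_)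
        (Filter.tendsto_atBot_add_const_right _ 1 Filter.tendsto_id)
      have := (abs_le.1 (hγbd x)).2
      simp only [hFdef, id]
      linarith
    have hsurj : Function.Surjective F := hFcont.surjective htop hbot
    let e : ℝ ≃o ℝ := StrictMono.orderIsoOfSurjective F hmono hsurj
    let h : ℝ ≃ₜ ℝ := e.toHomeomorph
    have hcoe : ∀ x, h x = F x := fun x =>
      congrFun (StrictMono.coe_orderIsoOfSurjective F hmono hsurj) x
    have hright : ∀ y, F (h.symm y) = y := fun y => by
      rw [← hcoe]; exact h.apply_symm_apply y
    have hleft : ∀ x, h.symm (F x) = x := fun x => by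
      rw [← hcoe]; exact h.symm_apply_apply x
    have hFstrict : ∀ x, HasStrictDerivAt F (F' x) x := by
      intro x
      have h1 := (hFs.contDiffAt (x := x)).hasStrictDerivAt (by simp)
      rwa [(hFd x).deriv] at h1
    have hginv : ∀ x, HasDerivAt (fun y => h.symm y) ((F' (h.symm x))⁻¹) x := by
      intro x
      have := HasStrictDerivAt.of_local_left_inverse (h.symm.continuous.continuousAt)
        (hFstrict (h.symm x)) (hF'pos _).ne'
        (Filter.Eventually.of_forall fun y => hright y)
      exact this.hasDerivAt
    have hgsmooth : ContDiff ℝ (⊤ : ℕ∞) (fun y => h.symm y) := by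
      have hcoeF : (h : ℝ → ℝ) = F := funext hcoe
      refine h.contDiff_symm_deriv (f' := F') (fun x => (hF'pos x).ne') ?_ ?_
      · rw [hcoeF]; exact hFd
      · rw [hcoeF]; exact hFs
    refine ⟨fun y => h.symm y, hgsmooth, hleft, hright, ?_⟩
    rintro ⟨C, hC⟩
    -- every value `(F' y)⁻¹ - 1` is bounded by `C`
    have hCall : ∀ y : ℝ, |(F' y)⁻¹ - 1| ≤ C := by
      intro y
      have hx := hC (F y)
      have hd : deriv (fun t => h.symm t - t) (F y) = (F' y)⁻¹ - 1 := by
        have h2 := ((hginv (F y)).sub (hasDerivAt_id (F y))).deriv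
        rwa [hleft y] at h2
      rwa [hd] at hx
    set ε : ℝ := (max C 0 + 2)⁻¹ with hεdef
    have hM2 : (0:ℝ) < max C 0 + 2 := by
      have := le_max_right C 0; linarith
    have hεpos : 0 < ε := inv_pos.2 hM2
    have hεlt : ε < 1 := by
      rw [hεdef, inv_lt_one_iff₀]
      right
      have := le_max_right C 0; linarith
    -- growth of φ on the negative axis
    have hBint : ∀ a b : ℝ, IntervalIntegrable Stmt15Aux.B MeasureTheory.volume a b :=
      fun a b => Stmt15Aux.B_cont.intervalIntegrable a b
    have hφeq : ∀ y : ℝ, φ y = φ (-1) + ∫ t in (-1:ℝ)..y, Stmt15Aux.B t := by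
      intro y
      have := intervalIntegral.integral_add_adjacent_intervals (a := (0:ℝ)) (b := (-1:ℝ))
        (c := y) (hBint 0 (-1)) (hBint (-1) y)
      rw [hφ]
      simp only [Stmt15Aux.B] at this ⊢
      linarith [this]
    have hgrow : ∀ y : ℝ, y ≤ -1 → φ (-1) + (-1 - y) / 2 ≤ φ y := by
      intro y hy
      have hmono' : ∀ t ∈ Set.Icc y (-1:ℝ), Stmt15Aux.B t ≤ -1/2 := by
        intro t ht
        have h1 : Real.arctan t ≤ Real.arctan (-1) :=
          Real.arctan_strictMono.monotone ht.2
        have h2 : Real.arctan (-1) = -(Real.pi/4) := by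
          rw [Real.arctan_neg, Real.arctan_one]
        have h3 : (0:ℝ) < 2 / Real.pi := by positivity
        have h4 : Stmt15Aux.B t ≤ 2 / Real.pi * (-(Real.pi/4)) := by
          rw [← h2]
          exact mul_le_mul_of_nonneg_left h1 h3.le
        have h5 : 2 / Real.pi * (-(Real.pi/4)) = -1/2 := by
          field_simp
          ring
        linarith
      have hint : (∫ t in y..(-1:ℝ), Stmt15Aux.B t) ≤ ∫ _t in y..(-1:ℝ), (-1/2 : ℝ) := by
        refine intervalIntegral.integral_mono_on hy (hBint y (-1))
          (intervalIntegrable_const) hmono'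
      rw [intervalIntegral.integral_const] at hint
      have hsymm : (∫ t in (-1:ℝ)..y, Stmt15Aux.B t) = -∫ t in y..(-1:ℝ), Stmt15Aux.B t :=
        intervalIntegral.integral_symm y (-1)
      have := hφeq y
      rw [hsymm] at this
      rw [this]
      rw [smul_eq_mul] at hint
      linarith [hint]
    -- pick a point where `cos (φ y) = 1` and `B y` is close to `-1`
    set Y : ℝ := Real.tan (Real.pi / 2 * (ε - 1)) with hYdef
    have hYa : -(Real.pi/2) < Real.pi / 2 * (ε - 1) := by nlinarith [Real.pi_pos]
    have hYb : Real.pi / 2 * (ε - 1) < Real.pi / 2 := by nlinarith [Real.pi_pos]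
    set z : ℝ := min Y (-1) with hzdef
    obtain ⟨k, hk⟩ := exists_nat_ge (φ z / (2 * Real.pi))
    set T : ℝ := (k : ℝ) * (2 * Real.pi) with hTdef
    have h2pi : (0:ℝ) < 2 * Real.pi := by positivity
    have hTz : φ z ≤ T := by
      have := mul_le_mul_of_nonneg_right hk h2pi.le
      rwa [div_mul_cancel₀ _ h2pi.ne'] at this
    set y₁ : ℝ := min z (-1 - 2 * |T - φ (-1)| - 1) with hy₁def
    have hy₁z : y₁ ≤ z := min_le_left _ _
    have hy₁1 : y₁ ≤ -1 := by
      have h1 := min_le_right z (-1 - 2 * |T - φ (-1)| - 1)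
      have h2 := abs_nonneg (T - φ (-1))
      simp only [hy₁def]
      calc min z (-1 - 2 * |T - φ (-1)| - 1) ≤ -1 - 2 * |T - φ (-1)| - 1 := h1
        _ ≤ -1 := by linarith
    have hφy₁ : T ≤ φ y₁ := by
      have h1 := hgrow y₁ hy₁1
      have h2 : y₁ ≤ -1 - 2 * |T - φ (-1)| - 1 := min_le_right _ _
      have h3 : T - φ (-1) ≤ |T - φ (-1)| := le_abs_self _
      linarith
    obtain ⟨y, hyIcc, hφy⟩ :=
      intermediate_value_Icc' hy₁z (hφs.continuous.continuousOn) ⟨hTz, hφy₁⟩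
    have hcos : Real.cos (φ y) = 1 := by
      rw [hφy]; exact Real.cos_nat_mul_two_pi k
    have hyY : y ≤ Y := hyIcc.2.trans (min_le_left _ _)
    have hBy : Stmt15Aux.B y ≤ ε - 1 := by
      have h1 : Real.arctan y ≤ Real.pi / 2 * (ε - 1) := by
        have h2 : Real.arctan y ≤ Real.arctan Y := Real.arctan_strictMono.monotone hyY
        rwa [hYdef, Real.arctan_tan hYa hYb] at h2
      have h3 : (0:ℝ) < 2 / Real.pi := by positivity
      have h4 : Stmt15Aux.B y ≤ 2 / Real.pi * (Real.pi / 2 * (ε - 1)) :=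
        mul_le_mul_of_nonneg_left h1 h3.le
      have h5 : 2 / Real.pi * (Real.pi / 2 * (ε - 1)) = ε - 1 := by
        field_simp
      linarith
    have hF'y : F' y ≤ ε := by
      simp only [hF'def, hcos, one_mul]
      linarith
    have hFypos := hF'pos y
    have hinv : max C 0 + 2 ≤ (F' y)⁻¹ := by
      have h1 := one_div_le_one_div_of_le hFypos hF'y
      rw [one_div, one_div, hεdef, inv_inv] at h1
      exact h1
    have h1 := hCall y
    have h2 : (F' y)⁻¹ - 1 ≤ |(F' y)⁻¹ - 1| := le_abs_self _
    have h3 : C ≤ max C 0 := le_max_left _ _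
    linarith
end
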